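/- arXiv:1601.02582 — 11 statements merged into one kernel-verified Lean document; each statement's English description precedes it below -/
import Mathlib

section
/- For every positive integer n ≥ 2 and every angle α with 0 < α < π/2, the inequality (1/n) sin(α) cos(α/n) > cos(α) sin(α/n) holds. -/
open Real

theorem stmt_2 (n : ℕ) (hn : 2 ≤ n) (α : ℝ) (h0 : 0 < α) (h1 : α < π / 2) :
    (1 / n) * Real.sin α * Real.cos (α / n) > Real.cos α * Real.sin (α / n) := by
  have hn0 : (0:ℝ) < n := by positivity
  set f : ℝ → ℝ := fun x => (1 / n) * Real.sin x * Real.cos (x / n) - Real.cos x * Real.sin (x / n) with hf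
  have hderiv : ∀ x : ℝ, HasDerivAt f ((1 - 1/(n:ℝ)^2) * Real.sin x * Real.sin (x / n)) x := by
    intro x
    have hdiv : HasDerivAt (fun y : ℝ => y / n) (1 / n) x := by
      simpa using (hasDerivAt_id x).div_const (n:ℝ)
    have hc : HasDerivAt (fun y : ℝ => Real.cos (y / n)) (-Real.sin (x / n) * (1 / n)) x :=
      by have := (Real.hasDerivAt_cos (x / n)).comp x hdiv; exact this
    have hs : HasDerivAt (fun y : ℝ => Real.sin (y / n)) (Real.cos (x / n) * (1 / n)) x :=
      by have := (Real.hasDerivAt_sin (x / n)).comp x hdiv; exact this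
    have h1 : HasDerivAt (fun y : ℝ => (1 / (n:ℝ)) * Real.sin y * Real.cos (y / n))
        ((1 / (n:ℝ)) * Real.cos x * Real.cos (x / n) +
          (1 / (n:ℝ)) * Real.sin x * (-Real.sin (x / n) * (1 / n))) x := by
      have := (((Real.hasDerivAt_sin x).const_mul (1 / (n:ℝ))).mul hc)
      exact this
    have h2 : HasDerivAt (fun y : ℝ => Real.cos y * Real.sin (y / n))
        (-Real.sin x * Real.sin (x / n) + Real.cos x * (Real.cos (x / n) * (1 / n))) x :=
      (Real.hasDerivAt_cos x).mul hs
    have := h1.sub h2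
    refine this.congr_deriv ?_
    field_simp
    ring
  have hmono : StrictMonoOn f (Set.Icc 0 (π / 2)) := by
    apply strictMonoOn_of_deriv_pos (convex_Icc _ _)
    · exact Continuous.continuousOn (by continuity)
    · intro x hx
      rw [interior_Icc] at hx
      rw [(hderiv x).deriv]
      have hx0 : 0 < x := hx.1
      have hxp : x < π / 2 := hx.2
      have hsx : 0 < Real.sin x := Real.sin_pos_of_pos_of_lt_pi hx0 (hxp.trans (by linarith [Real.pi_pos]))
      have hxn : 0 < x / n := by positivity
      have hsxn : 0 < Real.sin (x / n) := by
        apply Real.sin_pos_of_pos_of_lt_pi hxn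
        have : x / n ≤ x / 2 := by
          apply div_le_div_of_nonneg_left hx0.le (by norm_num) (by exact_mod_cast hn)
        nlinarith [Real.pi_pos]
      have hn2 : (1:ℝ) - 1/(n:ℝ)^2 > 0 := by
        have : (2:ℝ) ≤ n := by exact_mod_cast hn
        have h4 : (4:ℝ) ≤ (n:ℝ)^2 := by nlinarith
        have : 1/(n:ℝ)^2 ≤ 1/4 := by
          apply div_le_div_of_nonneg_left (by norm_num) (by norm_num) h4
        linarith
      positivity
  have key : f 0 < f α := by
    apply hmono (by constructor <;> [rfl; linarith [Real.pi_pos]]) ⟨h0.le, h1.le⟩ h0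
  simp [hf] at key
  rw [gt_iff_lt, one_div]
  exact key
end

section
/- Let n, r be integers with 2 ≤ r < n, and set φ(θ) = ((n-1)π + rθ)/n. For θ ∈ (0, π/r), both sin(θ)/sin(φ(θ)-θ) and sin(θ)/sin(φ(θ)) are strictly increasing functions of θ, and hence z(θ) = (sin θ)^n / (sin^{n-r}(φ(θ)-θ) · sin^r(φ(θ))) is strictly increasing on (0, π/r). -/
open Real

lemma aux_sin_div_mono (a b T : ℝ)
    (hden : ∀ θ ∈ Set.Ioo 0 T, 0 < Real.sin (a + b * θ))
    (hnum : ∀ θ ∈ Set.Ioo 0 T,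
      0 < Real.cos θ * Real.sin (a + b * θ) - Real.sin θ * (Real.cos (a + b * θ) * b)) :
    StrictMonoOn (fun θ => Real.sin θ / Real.sin (a + b * θ)) (Set.Ioo 0 T) := by
  apply strictMonoOn_of_deriv_pos (convex_Ioo 0 T)
  · apply ContinuousOn.div Real.continuous_sin.continuousOn
    · exact (Real.continuous_sin.comp (continuous_const.add (continuous_const.mul continuous_id))).continuousOn
    · exact fun x hx => (hden x hx).ne'
  · intro x hx
    rw [interior_Ioo] at hx
    have hlin : HasDerivAt (fun t : ℝ => a + b * t) b x := by
      simpa using ((hasDerivAt_id x).const_mul b).const_add a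
    have hs : HasDerivAt (fun t : ℝ => Real.sin (a + b * t)) (Real.cos (a + b * x) * b) x :=
      (Real.hasDerivAt_sin _).comp x hlin
    have hd : HasDerivAt (fun t : ℝ => Real.sin t / Real.sin (a + b * t))
        ((Real.cos x * Real.sin (a + b * x) - Real.sin x * (Real.cos (a + b * x) * b)) /
          Real.sin (a + b * x) ^ 2) x :=
      (Real.hasDerivAt_sin x).div hs (hden x hx).ne'
    rw [hd.deriv]
    exact div_pos (hnum x hx) (pow_pos (hden x hx) 2)

theorem stmt_6 (n r : ℕ) (hr : 2 ≤ r) (hrn : r < n) (φ : ℝ → ℝ)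
    (hφ : ∀ θ, φ θ = (((n : ℝ) - 1) * π + r * θ) / n) :
    StrictMonoOn (fun θ => Real.sin θ / Real.sin (φ θ - θ)) (Set.Ioo 0 (π / r)) ∧
    StrictMonoOn (fun θ => Real.sin θ / Real.sin (φ θ)) (Set.Ioo 0 (π / r)) ∧
    StrictMonoOn
      (fun θ => (Real.sin θ) ^ n /
        ((Real.sin (φ θ - θ)) ^ (n - r) * (Real.sin (φ θ)) ^ r))
      (Set.Ioo 0 (π / r)) := by
  have hπ := Real.pi_pos
  have hR2 : (2:ℝ) ≤ (r:ℝ) := by exact_mod_cast hr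
  have hRN : (r:ℝ) < (n:ℝ) := by exact_mod_cast hrn
  have hN3 : (3:ℝ) ≤ (n:ℝ) := by exact_mod_cast (by omega : 3 ≤ n)
  have hR0 : (0:ℝ) < (r:ℝ) := by linarith
  have hN0 : (0:ℝ) < (n:ℝ) := by linarith
  have hne : (n:ℝ) ≠ 0 := hN0.ne'
  obtain ⟨c, hc⟩ : ∃ c : ℝ, c = π / n := ⟨_, rfl⟩
  obtain ⟨k, hk⟩ : ∃ k : ℝ, k = 1 - (r:ℝ) / n := ⟨_, rfl⟩
  obtain ⟨m, hm⟩ : ∃ m : ℝ, m = (r:ℝ) / n := ⟨_, rfl⟩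
  have hm0 : 0 < m := hm ▸ div_pos hR0 hN0
  have hm1 : m < 1 := hm ▸ (div_lt_one hN0).2 hRN
  have hkm : k = 1 - m := by rw [hk, hm]
  have hk0 : 0 < k := by rw [hkm]; linarith
  have hk1 : k < 1 := by rw [hkm]; linarith
  have hc0 : 0 < c := hc ▸ div_pos hπ hN0
  have hchalf : c < π / 2 := by
    rw [hc, div_lt_div_iff₀ hN0 two_pos]; nlinarith
  have hThalf : π / (r:ℝ) ≤ π / 2 := by
    rw [div_le_div_iff₀ hR0 two_pos]; nlinarith
  -- arithmetic identities
  have hkT : c + k * (π / (r:ℝ)) = π / (r:ℝ) := by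
    rw [hc, hkm, hm]; field_simp [hN0.ne']; ring
  have hmT : m * (π / (r:ℝ)) = c := by
    rw [hc, hm]; field_simp [hN0.ne']
  -- pointwise facts on the interval
  have hsθ : ∀ θ ∈ Set.Ioo 0 (π / (r:ℝ)), 0 < Real.sin θ := by
    intro θ hθ
    exact Real.sin_pos_of_pos_of_lt_pi hθ.1 (by linarith [hθ.2])
  have hcθ : ∀ θ ∈ Set.Ioo 0 (π / (r:ℝ)), 0 < Real.cos θ := by
    intro θ hθ
    exact Real.cos_pos_of_mem_Ioo ⟨by linarith [hθ.1], by linarith [hθ.2]⟩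
  have hu : ∀ θ ∈ Set.Ioo 0 (π / (r:ℝ)), 0 < c + k * θ ∧ c + k * θ < π / 2 := by
    intro θ hθ
    have h1 : k * θ < k * (π / (r:ℝ)) := by
      exact mul_lt_mul_of_pos_left hθ.2 hk0
    constructor
    · nlinarith [hθ.1]
    · linarith
  have hv : ∀ θ ∈ Set.Ioo 0 (π / (r:ℝ)), 0 < c - m * θ ∧ c - m * θ < π / 2 := by
    intro θ hθ
    have h1 : m * θ < m * (π / (r:ℝ)) := mul_lt_mul_of_pos_left hθ.2 hm0
    have h2 : 0 < m * θ := mul_pos hm0 hθ.1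
    exact ⟨by linarith, by linarith⟩
  have hsu : ∀ θ ∈ Set.Ioo 0 (π / (r:ℝ)), 0 < Real.sin (c + k * θ) := by
    intro θ hθ
    obtain ⟨ha, hb⟩ := hu θ hθ
    exact Real.sin_pos_of_pos_of_lt_pi ha (by linarith)
  have hcu : ∀ θ ∈ Set.Ioo 0 (π / (r:ℝ)), 0 < Real.cos (c + k * θ) := by
    intro θ hθ
    obtain ⟨ha, hb⟩ := hu θ hθ
    exact Real.cos_pos_of_mem_Ioo ⟨by linarith, hb⟩
  have hsv : ∀ θ ∈ Set.Ioo 0 (π / (r:ℝ)), 0 < Real.sin (c - m * θ) := by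
    intro θ hθ
    obtain ⟨ha, hb⟩ := hv θ hθ
    exact Real.sin_pos_of_pos_of_lt_pi ha (by linarith)
  have hcv : ∀ θ ∈ Set.Ioo 0 (π / (r:ℝ)), 0 < Real.cos (c - m * θ) := by
    intro θ hθ
    obtain ⟨ha, hb⟩ := hv θ hθ
    exact Real.cos_pos_of_mem_Ioo ⟨by linarith, hb⟩
  -- rewriting the arguments of sin
  have e1 : ∀ θ : ℝ, φ θ - θ = π - (c + k * θ) := by
    intro θ
    rw [hφ, hc, hkm, hm]; field_simp [hN0.ne']; ring
  have e2 : ∀ θ : ℝ, φ θ = π - (c - m * θ) := by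
    intro θ
    rw [hφ, hc, hm]; field_simp [hN0.ne']; ring
  have E1 : (fun θ => Real.sin θ / Real.sin (φ θ - θ)) =
      fun θ => Real.sin θ / Real.sin (c + k * θ) := by
    funext θ; rw [e1 θ, Real.sin_pi_sub]
  have E2 : (fun θ => Real.sin θ / Real.sin (φ θ)) =
      fun θ => Real.sin θ / Real.sin (c + (-m) * θ) := by
    funext θ; rw [e2 θ, Real.sin_pi_sub]; ring_nf
  -- the two monotonicity statements
  have h1 : StrictMonoOn (fun θ => Real.sin θ / Real.sin (c + k * θ)) (Set.Ioo 0 (π / (r:ℝ))) := by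
    apply aux_sin_div_mono
    · exact hsu
    · intro θ hθ
      have hsub : Real.sin ((c + k * θ) - θ) =
          Real.sin (c + k * θ) * Real.cos θ - Real.cos (c + k * θ) * Real.sin θ :=
        Real.sin_sub _ _
      have harg : (c + k * θ) - θ = c - m * θ := by rw [hkm]; ring
      rw [harg] at hsub
      nlinarith [hsv θ hθ, mul_pos (hsθ θ hθ) (hcu θ hθ)]
  have h2 : StrictMonoOn (fun θ => Real.sin θ / Real.sin (c + (-m) * θ)) (Set.Ioo 0 (π / (r:ℝ))) := by
    apply aux_sin_div_mono
    · intro θ hθ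
      have : c + (-m) * θ = c - m * θ := by ring
      rw [this]; exact hsv θ hθ
    · intro θ hθ
      have harg : c + (-m) * θ = c - m * θ := by ring
      rw [harg]
      nlinarith [mul_pos (hcθ θ hθ) (hsv θ hθ), mul_pos (mul_pos (hsθ θ hθ) (hcv θ hθ)) hm0]
  refine ⟨by rw [E1]; exact h1, by rw [E2]; exact h2, ?_⟩
  -- the product statement
  intro x hx y hy hxy
  simp only
  have ex : ∀ z ∈ Set.Ioo 0 (π / (r:ℝ)),
      Real.sin z ^ n / (Real.sin (φ z - z) ^ (n - r) * Real.sin (φ z) ^ r) =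
      (Real.sin z / Real.sin (c + k * z)) ^ (n - r) *
        (Real.sin z / Real.sin (c + (-m) * z)) ^ r := by
    intro z hz
    have a1 : Real.sin (φ z - z) = Real.sin (c + k * z) := by rw [e1 z, Real.sin_pi_sub]
    have a2 : Real.sin (φ z) = Real.sin (c + (-m) * z) := by
      rw [e2 z, Real.sin_pi_sub]; ring_nf
    rw [a1, a2, div_pow, div_pow, div_mul_div_comm, ← pow_add,
      Nat.sub_add_cancel (le_of_lt hrn)]
  rw [ex x hx, ex y hy]
  have g1x : 0 < Real.sin x / Real.sin (c + k * x) := div_pos (hsθ x hx) (hsu x hx)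
  have g2x : 0 < Real.sin x / Real.sin (c + (-m) * x) := by
    have : c + (-m) * x = c - m * x := by ring
    rw [this]; exact div_pos (hsθ x hx) (hsv x hx)
  have l1 := h1 hx hy hxy
  have l2 := h2 hx hy hxy
  simp only at l1 l2
  have p1 : (Real.sin x / Real.sin (c + k * x)) ^ (n - r) <
      (Real.sin y / Real.sin (c + k * y)) ^ (n - r) :=
    pow_lt_pow_left₀ l1 g1x.le (by omega)
  have p2 : (Real.sin x / Real.sin (c + (-m) * x)) ^ r <
      (Real.sin y / Real.sin (c + (-m) * y)) ^ r :=
    pow_lt_pow_left₀ l2 g2x.le (by omega)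
  exact mul_lt_mul'' p1 p2 (pow_nonneg g1x.le _) (pow_nonneg g2x.le _)
end

section
/- Let n ≥ 2, r = 1, and φ(θ) = ((n-1)π + θ)/n. The function z(θ) = (sin θ)^n / (sin^{n-1}(φ(θ)-θ) · sin(φ(θ))) is strictly increasing on (0, π) and maps (0, π) onto (0, n^n/(n-1)^{n-1}). -/
open Real


lemma aux_c_anti : StrictAntiOn (fun x => x * (Real.cos x / Real.sin x)) (Set.Ioo 0 π) := by
  have hderiv : ∀ x ∈ Set.Ioo (0:ℝ) π,
      HasDerivAt (fun x => x * (Real.cos x / Real.sin x))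
        ((Real.cos x * Real.sin x - x) / Real.sin x ^ 2) x := by
    intro x hx
    have hs : Real.sin x ≠ 0 := ne_of_gt (Real.sin_pos_of_pos_of_lt_pi hx.1 hx.2)
    have hd : HasDerivAt (fun x => Real.cos x / Real.sin x)
        ((-Real.sin x * Real.sin x - Real.cos x * Real.cos x) / Real.sin x ^ 2) x :=
      (Real.hasDerivAt_cos x).div (Real.hasDerivAt_sin x) hs
    have : HasDerivAt (fun y => y * (Real.cos y / Real.sin y)) _ x := (hasDerivAt_id' x).mul hd
    convert this using 1
    have hpy := Real.sin_sq_add_cos_sq x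
    have h1 : -Real.sin x * Real.sin x - Real.cos x * Real.cos x = -1 := by nlinarith [hpy]
    rw [h1]
    field_simp
    ring
  apply strictAntiOn_of_deriv_neg (convex_Ioo 0 π)
  · exact fun x hx => ((hderiv x hx).continuousAt).continuousWithinAt
  · intro x hx
    rw [interior_Ioo] at hx
    rw [(hderiv x hx).deriv]
    have hs : 0 < Real.sin x := Real.sin_pos_of_pos_of_lt_pi hx.1 hx.2
    apply div_neg_of_neg_of_pos _ (by positivity)
    have h2 : Real.sin (2*x) < 2*x := Real.sin_lt (by linarith [hx.1])
    rw [Real.sin_two_mul] at h2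
    nlinarith

lemma aux_key (n : ℕ) (hn : 2 ≤ n) {u : ℝ} (hu : u ∈ Set.Ioo 0 π) :
    (n:ℝ) * (Real.cos u / Real.sin u) <
      ((n:ℝ)-1) * ((((n:ℝ)-1)/n) * (Real.cos ((((n:ℝ)-1)/n)*u) / Real.sin ((((n:ℝ)-1)/n)*u)))
      + (1/(n:ℝ)) * (Real.cos ((1/(n:ℝ))*u) / Real.sin ((1/(n:ℝ))*u)) := by
  have hN : (2:ℝ) ≤ (n:ℝ) := by exact_mod_cast hn
  have hNpos : (0:ℝ) < n := by linarith
  set a : ℝ := ((n:ℝ)-1)/n with ha_def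
  set b : ℝ := 1/(n:ℝ) with hb_def
  have ha0 : 0 < a := by rw [ha_def]; apply div_pos <;> linarith
  have ha1 : a < 1 := by rw [ha_def, div_lt_one hNpos]; linarith
  have hb0 : 0 < b := by rw [hb_def]; positivity
  have hb1 : b < 1 := by rw [hb_def, div_lt_one hNpos]; linarith
  have hu0 := hu.1
  have huπ := hu.2
  have hau : a * u ∈ Set.Ioo 0 π := ⟨by positivity, by nlinarith⟩
  have hbu : b * u ∈ Set.Ioo 0 π := ⟨by positivity, by nlinarith⟩
  have haul : a * u < u := by nlinarith
  have hbul : b * u < u := by nlinarith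
  have h1 : u * (Real.cos u / Real.sin u) < (a*u) * (Real.cos (a*u) / Real.sin (a*u)) :=
    aux_c_anti hau hu haul
  have h2 : u * (Real.cos u / Real.sin u) < (b*u) * (Real.cos (b*u) / Real.sin (b*u)) :=
    aux_c_anti hbu hu hbul
  have hn1 : (1:ℝ) ≤ (n:ℝ) - 1 := by linarith
  have key : (n:ℝ) * (u * (Real.cos u / Real.sin u)) <
      ((n:ℝ)-1) * ((a*u) * (Real.cos (a*u) / Real.sin (a*u)))
      + ((b*u) * (Real.cos (b*u) / Real.sin (b*u))) := by
    nlinarith [mul_lt_mul_of_pos_left h1 (show (0:ℝ) < (n:ℝ)-1 by linarith)]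
  have := (mul_lt_mul_iff_right₀ hu0).mp (show u * ((n:ℝ) * (Real.cos u / Real.sin u)) <
      u * (((n:ℝ)-1) * (a * (Real.cos (a*u) / Real.sin (a*u)))
        + b * (Real.cos (b*u) / Real.sin (b*u))) by ring_nf; ring_nf at key ⊢; linarith [key])
  linarith [this]

lemma aux_slope : Filter.Tendsto (fun u : ℝ => Real.sin u / u) (nhdsWithin 0 {(0:ℝ)}ᶜ) (nhds 1) := by
  have h := Real.hasDerivAt_sin 0
  rw [hasDerivAt_iff_tendsto_slope] at h
  have hs : slope Real.sin 0 = fun u => Real.sin u / u := by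
    funext u; simp [slope, Real.sin_zero, div_eq_inv_mul]
  rw [hs] at h
  simpa using h

lemma aux_sc (c : ℝ) (hc : c ≠ 0) :
    Filter.Tendsto (fun u : ℝ => Real.sin (c*u) / u) (nhdsWithin 0 {(0:ℝ)}ᶜ) (nhds c) := by
  have hm : Filter.Tendsto (fun u : ℝ => c*u) (nhdsWithin 0 {(0:ℝ)}ᶜ) (nhdsWithin 0 {(0:ℝ)}ᶜ) := by
    apply tendsto_nhdsWithin_of_tendsto_nhds_of_eventually_within
    · have : Filter.Tendsto (fun u : ℝ => c*u) (nhds 0) (nhds (c*0)) :=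
        (continuous_const.mul continuous_id).tendsto 0
      simpa using this.mono_left nhdsWithin_le_nhds
    · filter_upwards [self_mem_nhdsWithin] with t ht
      exact mul_ne_zero hc ht
  have h1 := (aux_slope.comp hm).const_mul c
  rw [mul_one] at h1
  apply h1.congr'
  filter_upwards [self_mem_nhdsWithin] with t ht
  show c * (Real.sin (c*t) / (c*t)) = Real.sin (c*t) / t
  have ht' : t ≠ (0:ℝ) := ht
  field_simp

theorem stmt_7 (n : ℕ) (hn : 2 ≤ n) (φ : ℝ → ℝ)
    (hφ : ∀ θ, φ θ = (((n : ℝ) - 1) * π + θ) / n) (z : ℝ → ℝ)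
    (hz : ∀ θ, z θ = (Real.sin θ) ^ n /
        ((Real.sin (φ θ - θ)) ^ (n - 1) * Real.sin (φ θ))) :
    StrictMonoOn z (Set.Ioo 0 π) ∧
    z '' Set.Ioo 0 π = Set.Ioo 0 ((n : ℝ) ^ n / ((n : ℝ) - 1) ^ (n - 1)) := by
  have hN : (2:ℝ) ≤ (n:ℝ) := by exact_mod_cast hn
  have hNpos : (0:ℝ) < n := by linarith
  have hN0 : (n:ℝ) ≠ 0 := ne_of_gt hNpos
  set a : ℝ := ((n:ℝ)-1)/n with ha_def
  set b : ℝ := 1/(n:ℝ) with hb_def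
  have ha0 : 0 < a := by rw [ha_def]; apply div_pos <;> linarith
  have ha1 : a < 1 := by rw [ha_def, div_lt_one hNpos]; linarith
  have hb0 : 0 < b := by rw [hb_def]; positivity
  have hb1 : b < 1 := by rw [hb_def, div_lt_one hNpos]; linarith
  have hcast : ((n-1 : ℕ) : ℝ) = (n:ℝ) - 1 := by
    have := Nat.cast_sub (show 1 ≤ n by omega) (R := ℝ)
    simpa using this
  -- rewrite z
  have hz' : ∀ θ, z θ = Real.sin θ ^ n /
      (Real.sin (a*(π-θ)) ^ (n-1) * Real.sin (b*(π-θ))) := by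
    intro θ
    rw [hz, hφ]
    have e1 : (((n:ℝ)-1)*π + θ)/n - θ = a*(π-θ) := by
      rw [ha_def]; field_simp; ring
    have e2 : (((n:ℝ)-1)*π + θ)/n = π - b*(π-θ) := by
      rw [hb_def]; field_simp; ring
    rw [e1, e2, Real.sin_pi_sub]
  -- membership of arguments
  have hargs : ∀ θ ∈ Set.Ioo (0:ℝ) π,
      0 < Real.sin θ ∧ 0 < Real.sin (a*(π-θ)) ∧ 0 < Real.sin (b*(π-θ)) := by
    intro θ hθ
    obtain ⟨h1, h2⟩ := hθ
    refine ⟨Real.sin_pos_of_pos_of_lt_pi h1 h2, ?_, ?_⟩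
    · exact Real.sin_pos_of_pos_of_lt_pi (by nlinarith) (by nlinarith [Real.pi_pos])
    · exact Real.sin_pos_of_pos_of_lt_pi (by nlinarith) (by nlinarith [Real.pi_pos])
  -- the log function
  set L : ℝ → ℝ := fun θ => (n:ℝ) * Real.log (Real.sin θ)
      - ((n:ℝ)-1) * Real.log (Real.sin (a*(π-θ)))
      - Real.log (Real.sin (b*(π-θ))) with hL_def
  have hzL : ∀ θ ∈ Set.Ioo (0:ℝ) π, z θ = Real.exp (L θ) := by
    intro θ hθ
    obtain ⟨hs1, hs2, hs3⟩ := hargs θ hθ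
    rw [hz' θ, hL_def]
    have e1 : Real.sin θ ^ n = Real.exp ((n:ℝ) * Real.log (Real.sin θ)) := by
      rw [Real.exp_nat_mul, Real.exp_log hs1]
    have e2 : Real.sin (a*(π-θ)) ^ (n-1)
        = Real.exp (((n:ℝ)-1) * Real.log (Real.sin (a*(π-θ)))) := by
      rw [← hcast, Real.exp_nat_mul, Real.exp_log hs2]
    have e3 : Real.sin (b*(π-θ)) = Real.exp (Real.log (Real.sin (b*(π-θ)))) :=
      (Real.exp_log hs3).symm
    rw [e1, e2]
    conv_lhs => rw [e3]
    rw [← Real.exp_add, ← Real.exp_sub]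
    congr 1
    ring
  -- derivative of L
  have hLderiv : ∀ θ ∈ Set.Ioo (0:ℝ) π, HasDerivAt L
      ((n:ℝ) * (Real.cos θ / Real.sin θ)
        + ((n:ℝ)-1) * (a * (Real.cos (a*(π-θ)) / Real.sin (a*(π-θ))))
        + b * (Real.cos (b*(π-θ)) / Real.sin (b*(π-θ)))) θ := by
    intro θ hθ
    obtain ⟨hs1, hs2, hs3⟩ := hargs θ hθ
    have hinner : HasDerivAt (fun x : ℝ => π - x) (-1) θ := by
      simpa using (hasDerivAt_id θ).const_sub π
    have hga : HasDerivAt (fun x : ℝ => a*(π-x)) (a * -1) θ := hinner.const_mul a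
    have hgb : HasDerivAt (fun x : ℝ => b*(π-x)) (b * -1) θ := hinner.const_mul b
    have h1 : HasDerivAt (fun x : ℝ => (n:ℝ) * Real.log (Real.sin x))
        ((n:ℝ) * (Real.cos θ / Real.sin θ)) θ :=
      (((Real.hasDerivAt_sin θ).log (ne_of_gt hs1))).const_mul (n:ℝ)
    have h2 : HasDerivAt (fun x : ℝ => ((n:ℝ)-1) * Real.log (Real.sin (a*(π-x))))
        (((n:ℝ)-1) * ((Real.cos (a*(π-θ)) * (a * -1)) / Real.sin (a*(π-θ)))) θ :=
      ((((Real.hasDerivAt_sin (a*(π-θ))).comp (h := fun x : ℝ => a*(π-x)) θ hga).log (ne_of_gt hs2))).const_mul ((n:ℝ)-1)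
    have h3 : HasDerivAt (fun x : ℝ => Real.log (Real.sin (b*(π-x))))
        ((Real.cos (b*(π-θ)) * (b * -1)) / Real.sin (b*(π-θ))) θ :=
      (((Real.hasDerivAt_sin (b*(π-θ))).comp (h := fun x : ℝ => b*(π-x)) θ hgb).log (ne_of_gt hs3))
    have : HasDerivAt L _ θ := (h1.sub h2).sub h3
    convert this using 1
    ring
  -- positivity of the derivative
  have hLpos : ∀ θ ∈ Set.Ioo (0:ℝ) π,
      0 < (n:ℝ) * (Real.cos θ / Real.sin θ)
        + ((n:ℝ)-1) * (a * (Real.cos (a*(π-θ)) / Real.sin (a*(π-θ))))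
        + b * (Real.cos (b*(π-θ)) / Real.sin (b*(π-θ))) := by
    intro θ hθ
    have hu : π - θ ∈ Set.Ioo (0:ℝ) π := ⟨by linarith [hθ.2], by linarith [hθ.1]⟩
    have hkey := aux_key n hn hu
    rw [← ha_def, ← hb_def] at hkey
    have e1 : Real.cos θ = -Real.cos (π - θ) := by rw [Real.cos_pi_sub]; ring
    have e2 : Real.sin θ = Real.sin (π - θ) := (Real.sin_pi_sub θ).symm
    rw [e1, e2, neg_div]
    linarith [hkey]
  -- strict monotonicity of L, then of z
  have hLmono : StrictMonoOn L (Set.Ioo 0 π) := by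
    apply strictMonoOn_of_deriv_pos (convex_Ioo 0 π)
    · exact fun x hx => ((hLderiv x hx).continuousAt).continuousWithinAt
    · intro x hx
      rw [interior_Ioo] at hx
      rw [(hLderiv x hx).deriv]
      exact hLpos x hx
  have hzmono : StrictMonoOn z (Set.Ioo 0 π) := by
    intro x hx y hy hxy
    rw [hzL x hx, hzL y hy]
    exact Real.exp_lt_exp.2 (hLmono hx hy hxy)
  refine ⟨hzmono, ?_⟩
  -- the limit M
  set M : ℝ := (n:ℝ)^n / ((n:ℝ)-1)^(n-1) with hM_def
  have hMpos : 0 < M := by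
    rw [hM_def]; apply div_pos (by positivity) (by apply pow_pos; linarith)
  -- tendsto at π
  set F : ℝ → ℝ := fun u => Real.sin u ^ n / (Real.sin (a*u) ^ (n-1) * Real.sin (b*u))
    with hF_def
  have hzF : ∀ θ, z θ = F (π - θ) := by
    intro θ
    rw [hz' θ, hF_def]
    simp only
    rw [Real.sin_pi_sub]
  have hFlim : Filter.Tendsto F (nhdsWithin 0 (Set.Ioi 0)) (nhds M) := by
    have hmono : nhdsWithin (0:ℝ) (Set.Ioi 0) ≤ nhdsWithin 0 {(0:ℝ)}ᶜ :=
      nhdsWithin_mono 0 (fun x hx => ne_of_gt hx)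
    have h1 : Filter.Tendsto (fun u : ℝ => Real.sin u / u) (nhdsWithin 0 (Set.Ioi 0))
        (nhds 1) := aux_slope.mono_left hmono
    have h2 := (aux_sc a (ne_of_gt ha0)).mono_left hmono
    have h3 := (aux_sc b (ne_of_gt hb0)).mono_left hmono
    have hden_ne : a^(n-1) * b ≠ 0 := by positivity
    have hcomb := (h1.pow n).div ((h2.pow (n-1)).mul h3) hden_ne
    have heq : ∀ᶠ u in nhdsWithin (0:ℝ) (Set.Ioi 0),
        (Real.sin u / u)^n / ((Real.sin (a*u) / u)^(n-1) * (Real.sin (b*u) / u)) = F u := by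
      filter_upwards [self_mem_nhdsWithin] with u hu
      have hu0 : u ≠ 0 := ne_of_gt hu
      have hun : u^n ≠ 0 := pow_ne_zero n hu0
      rw [hF_def]
      simp only
      rw [div_pow, div_pow, div_mul_div_comm]
      rw [show u^(n-1) * u = u^n by rw [← pow_succ]; congr 1; omega]
      rw [div_div_div_cancel_right₀]
      exact hun
    have hfinal := hcomb.congr' heq
    have hval : (1:ℝ)^n / (a^(n-1) * b) = M := by
      rw [ha_def, hb_def, hM_def, one_pow, div_pow]
      rw [div_mul_div_comm, mul_one, one_div_div]
      congr 1
      rw [← pow_succ]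
      congr 1
      omega
    rwa [hval] at hfinal
  have hzlim : Filter.Tendsto z (nhdsWithin π (Set.Iio π)) (nhds M) := by
    have hmap : Filter.Tendsto (fun θ : ℝ => π - θ) (nhdsWithin π (Set.Iio π))
        (nhdsWithin 0 (Set.Ioi 0)) := by
      apply tendsto_nhdsWithin_of_tendsto_nhds_of_eventually_within
      · have : Filter.Tendsto (fun θ : ℝ => π - θ) (nhds π) (nhds (π - π)) :=
          (continuous_const.sub continuous_id).tendsto π
        simpa using this.mono_left nhdsWithin_le_nhds
      · filter_upwards [self_mem_nhdsWithin] with t ht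
        exact sub_pos.2 (Set.mem_Iio.mp ht)
    exact (hFlim.comp hmap).congr (fun θ => (hzF θ).symm)
  -- upper bound
  have hub : ∀ θ ∈ Set.Ioo (0:ℝ) π, z θ < M := by
    intro θ hθ
    set θ' := (θ + π)/2 with hθ'_def
    have hθ'mem : θ' ∈ Set.Ioo (0:ℝ) π := ⟨by rw [hθ'_def]; linarith [hθ.1, hθ.2], by
      rw [hθ'_def]; linarith [hθ.2]⟩
    have h1 : z θ < z θ' := hzmono hθ hθ'mem (by rw [hθ'_def]; linarith [hθ.2])
    have h2 : z θ' ≤ M := by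
      apply ge_of_tendsto hzlim
      filter_upwards [Ioo_mem_nhdsLT_of_mem (show π ∈ Set.Ioc θ' π from ⟨hθ'mem.2, le_refl π⟩)]
        with t ht
      exact le_of_lt (hzmono hθ'mem ⟨lt_trans hθ'mem.1 ht.1, ht.2⟩ ht.1)
    linarith
  have hpos : ∀ θ ∈ Set.Ioo (0:ℝ) π, 0 < z θ := by
    intro θ hθ
    obtain ⟨hs1, hs2, hs3⟩ := hargs θ hθ
    rw [hz' θ]
    exact div_pos (pow_pos hs1 n) (mul_pos (pow_pos hs2 _) hs3)
  -- image
  ext y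
  constructor
  · rintro ⟨θ, hθ, rfl⟩
    exact ⟨hpos θ hθ, hub θ hθ⟩
  · rintro ⟨hy0, hyM⟩
    -- find t₁ with z t₁ > y
    have hev : ∀ᶠ t in nhdsWithin π (Set.Iio π), y < z t ∧ t ∈ Set.Ioo (0:ℝ) π := by
      apply Filter.Eventually.and
      · exact hzlim.eventually (eventually_gt_nhds hyM)
      · filter_upwards [Ioo_mem_nhdsLT_of_mem
          (show π ∈ Set.Ioc (0:ℝ) π from ⟨Real.pi_pos, le_refl π⟩)] with t ht
        exact ht
    obtain ⟨t₁, hyt₁, ht₁⟩ := hev.exists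
    -- continuity on Icc 0 t₁
    have hcont : ContinuousOn z (Set.Icc 0 t₁) := by
      have hd : ∀ θ ∈ Set.Icc (0:ℝ) t₁,
          Real.sin (a*(π-θ)) ^ (n-1) * Real.sin (b*(π-θ)) ≠ 0 := by
        intro θ hθ
        have hπθ1 : π - t₁ ≤ π - θ := by linarith [hθ.2]
        have hπθ2 : π - θ ≤ π := by linarith [hθ.1]
        have ht₁π : 0 < π - t₁ := by linarith [ht₁.2]
        have hs2 : 0 < Real.sin (a*(π-θ)) :=
          Real.sin_pos_of_pos_of_lt_pi (by nlinarith) (by nlinarith [Real.pi_pos])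
        have hs3 : 0 < Real.sin (b*(π-θ)) :=
          Real.sin_pos_of_pos_of_lt_pi (by nlinarith) (by nlinarith [Real.pi_pos])
        positivity
      apply ContinuousOn.congr (f := fun θ => Real.sin θ ^ n /
          (Real.sin (a*(π-θ)) ^ (n-1) * Real.sin (b*(π-θ))))
      · apply ContinuousOn.div
        · exact (Real.continuous_sin.pow n).continuousOn
        · apply ContinuousOn.mul
          · exact ((Real.continuous_sin.comp
              (continuous_const.mul (continuous_const.sub continuous_id))).pow (n-1)).continuousOn
          · exact (Real.continuous_sin.comp
              (continuous_const.mul (continuous_const.sub continuous_id))).continuousOn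
        · exact hd
      · intro θ _
        exact hz' θ
    have hz0 : z 0 = 0 := by
      rw [hz' 0]
      simp [Real.sin_zero, zero_pow (show n ≠ 0 by omega)]
    have hivt := intermediate_value_Ioo (le_of_lt ht₁.1) hcont
    have hy_mem : y ∈ Set.Ioo (z 0) (z t₁) := by
      rw [hz0]; exact ⟨hy0, hyt₁⟩
    obtain ⟨θ, hθ, hθy⟩ := hivt hy_mem
    exact ⟨θ, ⟨hθ.1, lt_trans hθ.2 ht₁.2⟩, hθy⟩
end

section
/- Let n = 1, r ≥ 2, so φ(θ) = rθ. The function z(θ) = sin(θ) · sin^{r-1}((r-1)θ) / sin^r(rθ) is strictly increasing on (0, π/r) and maps (0, π/r) onto ((r-1)^{r-1}/r^r, ∞). -/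
open Real Filter Set Topology

theorem aux8 (m : ℕ) :
    StrictMonoOn (fun θ : ℝ => Real.sin θ * Real.sin (((m:ℝ)+1)*θ) ^ (m+1) /
        Real.sin (((m:ℝ)+2)*θ) ^ (m+2)) (Set.Ioo 0 (π/((m:ℝ)+2))) ∧
    (fun θ : ℝ => Real.sin θ * Real.sin (((m:ℝ)+1)*θ) ^ (m+1) /
        Real.sin (((m:ℝ)+2)*θ) ^ (m+2)) '' Set.Ioo 0 (π/((m:ℝ)+2)) =
      Set.Ioi (((m:ℝ)+1) ^ (m+1) / ((m:ℝ)+2) ^ (m+2)) := by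
  set f : ℝ → ℝ := fun θ : ℝ => Real.sin θ * Real.sin (((m:ℝ)+1)*θ) ^ (m+1) /
        Real.sin (((m:ℝ)+2)*θ) ^ (m+2) with hf
  have hc : (0:ℝ) < (m:ℝ)+1 := by positivity
  have hR : (0:ℝ) < (m:ℝ)+2 := by positivity
  set b : ℝ := π/((m:ℝ)+2) with hbdef
  have hb0 : 0 < b := by positivity
  have hRb : ((m:ℝ)+2) * b = π := by
    rw [hbdef]; field_simp
  have key : ∀ θ ∈ Ioo (0:ℝ) b, 0 < Real.sin θ ∧ 0 < Real.sin (((m:ℝ)+1)*θ) ∧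
      0 < Real.sin (((m:ℝ)+2)*θ) := by
    intro θ hθ
    have hθπ : θ < π := by
      have : b ≤ π := by
        rw [hbdef]
        calc π/((m:ℝ)+2) ≤ π/1 := by
              apply div_le_div_of_nonneg_left pi_pos.le one_pos (by linarith)
          _ = π := div_one π
      linarith [hθ.2]
    refine ⟨Real.sin_pos_of_pos_of_lt_pi hθ.1 hθπ, ?_, ?_⟩
    · apply Real.sin_pos_of_pos_of_lt_pi (mul_pos hc hθ.1)
      calc ((m:ℝ)+1)*θ < ((m:ℝ)+1)*b := by nlinarith [hθ.2]
        _ < ((m:ℝ)+2)*b := by nlinarith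
        _ = π := hRb
    · apply Real.sin_pos_of_pos_of_lt_pi (mul_pos hR hθ.1)
      calc ((m:ℝ)+2)*θ < ((m:ℝ)+2)*b := by nlinarith [hθ.2]
        _ = π := hRb
  have hcont : ContinuousOn f (Ioo 0 b) := by
    apply ContinuousOn.div
    · fun_prop
    · fun_prop
    · exact fun θ hθ => pow_ne_zero _ (key θ hθ).2.2.ne'
  -- derivative
  have hderiv : ∀ θ ∈ Ioo (0:ℝ) b, 0 < deriv f θ := by
    intro θ hθ
    obtain ⟨hs1, hs2, hs3⟩ := key θ hθ
    have hd2 : HasDerivAt (fun x : ℝ => Real.sin (((m:ℝ)+1)*x))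
        (Real.cos (((m:ℝ)+1)*θ) * (((m:ℝ)+1))) θ := by
      simpa [Function.comp_def] using (Real.hasDerivAt_sin (((m:ℝ)+1)*θ)).comp θ
        ((hasDerivAt_id θ).const_mul ((m:ℝ)+1))
    have hd3 : HasDerivAt (fun x : ℝ => Real.sin (((m:ℝ)+2)*x))
        (Real.cos (((m:ℝ)+2)*θ) * (((m:ℝ)+2))) θ := by
      simpa [Function.comp_def] using (Real.hasDerivAt_sin (((m:ℝ)+2)*θ)).comp θ
        ((hasDerivAt_id θ).const_mul ((m:ℝ)+2))
    have hN : HasDerivAt (fun x : ℝ => Real.sin x * Real.sin (((m:ℝ)+1)*x) ^ (m+1))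
        (Real.cos θ * Real.sin (((m:ℝ)+1)*θ) ^ (m+1) +
          Real.sin θ * ((m+1 : ℕ) * Real.sin (((m:ℝ)+1)*θ) ^ m *
            (Real.cos (((m:ℝ)+1)*θ) * ((m:ℝ)+1)))) θ :=
      (Real.hasDerivAt_sin θ).mul (hd2.pow (m+1))
    have hD : HasDerivAt (fun x : ℝ => Real.sin (((m:ℝ)+2)*x) ^ (m+2))
        ((m+2 : ℕ) * Real.sin (((m:ℝ)+2)*θ) ^ (m+1) *
          (Real.cos (((m:ℝ)+2)*θ) * ((m:ℝ)+2))) θ := hd3.pow (m+2)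
    have hz' := hN.div hD (pow_ne_zero _ hs3.ne')
    rw [show deriv f θ = _ from hz'.deriv]
    apply div_pos
    · have h3 : Real.sin (((m:ℝ)+2)*θ) =
          Real.sin θ * Real.cos (((m:ℝ)+1)*θ) + Real.cos θ * Real.sin (((m:ℝ)+1)*θ) := by
        rw [show ((m:ℝ)+2)*θ = θ + ((m:ℝ)+1)*θ by ring, Real.sin_add]
      have hc3 : Real.cos (((m:ℝ)+2)*θ) =
          Real.cos θ * Real.cos (((m:ℝ)+1)*θ) - Real.sin θ * Real.sin (((m:ℝ)+1)*θ) := by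
        rw [show ((m:ℝ)+2)*θ = θ + ((m:ℝ)+1)*θ by ring, Real.cos_add]
      have hfac : (Real.cos θ * Real.sin (((m:ℝ)+1)*θ) ^ (m+1) +
          Real.sin θ * ((m+1 : ℕ) * Real.sin (((m:ℝ)+1)*θ) ^ m *
            (Real.cos (((m:ℝ)+1)*θ) * ((m:ℝ)+1)))) * Real.sin (((m:ℝ)+2)*θ) ^ (m+2) -
          Real.sin θ * Real.sin (((m:ℝ)+1)*θ) ^ (m+1) *
            ((m+2 : ℕ) * Real.sin (((m:ℝ)+2)*θ) ^ (m+1) *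
              (Real.cos (((m:ℝ)+2)*θ) * ((m:ℝ)+2))) =
          Real.sin (((m:ℝ)+1)*θ) ^ m * Real.sin (((m:ℝ)+2)*θ) ^ (m+1) *
            ((Real.cos θ * Real.sin (((m:ℝ)+1)*θ) -
                ((m:ℝ)+1) * Real.sin θ * Real.cos (((m:ℝ)+1)*θ)) ^ 2 +
              ((m:ℝ)+2) ^ 2 * (Real.sin θ * Real.sin (((m:ℝ)+1)*θ)) ^ 2) := by
        rw [h3, hc3]; push_cast; ring
      rw [hfac]
      apply mul_pos (mul_pos (pow_pos hs2 m) (pow_pos hs3 (m+1)))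
      have h2 : 0 < ((m:ℝ)+2) ^ 2 * (Real.sin θ * Real.sin (((m:ℝ)+1)*θ)) ^ 2 := by
        have := mul_pos hs1 hs2
        positivity
      exact add_pos_of_nonneg_of_pos (sq_nonneg _) h2
    · exact pow_pos (pow_pos hs3 (m+2)) 2
  have hmono : StrictMonoOn f (Ioo 0 b) := by
    apply strictMonoOn_of_deriv_pos (convex_Ioo _ _) hcont
    intro θ hθ
    rw [interior_Ioo] at hθ
    exact hderiv θ hθ
  refine ⟨hmono, ?_⟩
  -- limit at 0
  have hslope : Tendsto (fun x : ℝ => Real.sin x / x) (𝓝[≠] (0:ℝ)) (𝓝 1) := by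
    have h := hasDerivAt_iff_tendsto_slope.mp (Real.hasDerivAt_sin 0)
    rw [Real.cos_zero] at h
    refine h.congr (fun x => ?_)
    simp [slope_fun_def_field]
  have hmulmap : ∀ a : ℝ, 0 < a →
      Tendsto (fun θ : ℝ => a*θ) (𝓝[>] (0:ℝ)) (𝓝[≠] (0:ℝ)) := by
    intro a ha
    rw [tendsto_nhdsWithin_iff]
    constructor
    · have : Tendsto (fun θ : ℝ => a*θ) (𝓝 0) (𝓝 0) := by
        simpa [Pi.mul_def] using (continuous_const.mul continuous_id).tendsto (0:ℝ)
      exact this.mono_left nhdsWithin_le_nhds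
    · filter_upwards [self_mem_nhdsWithin] with θ hθ
      exact (mul_pos ha hθ).ne'
  have h1 : Tendsto (fun θ : ℝ => Real.sin θ / θ) (𝓝[>] (0:ℝ)) (𝓝 1) :=
    hslope.mono_left (nhdsWithin_mono _ (fun x hx => ne_of_gt hx))
  have h2 : Tendsto (fun θ : ℝ => Real.sin (((m:ℝ)+1)*θ) / (((m:ℝ)+1)*θ))
      (𝓝[>] (0:ℝ)) (𝓝 1) := hslope.comp (hmulmap _ hc)
  have h3t : Tendsto (fun θ : ℝ => Real.sin (((m:ℝ)+2)*θ) / (((m:ℝ)+2)*θ))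
      (𝓝[>] (0:ℝ)) (𝓝 1) := hslope.comp (hmulmap _ hR)
  set L : ℝ := ((m:ℝ)+1) ^ (m+1) / ((m:ℝ)+2) ^ (m+2) with hLdef
  have hL : Tendsto f (𝓝[>] (0:ℝ)) (𝓝 L) := by
    have G := (((h1.mul (h2.pow (m+1))).mul_const (((m:ℝ)+1) ^ (m+1))).div
      ((h3t.pow (m+2)).mul_const (((m:ℝ)+2) ^ (m+2))) (by positivity))
    have hval : (1 * 1 ^ (m+1) * ((m:ℝ)+1) ^ (m+1)) / (1 ^ (m+2) * ((m:ℝ)+2) ^ (m+2)) = L := by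
      rw [hLdef]; norm_num
    rw [hval] at G
    refine G.congr' ?_
    filter_upwards [Ioo_mem_nhdsGT hb0] with θ hθ
    obtain ⟨hs1, hs2, hs3⟩ := key θ hθ
    have hθ0 : θ ≠ 0 := hθ.1.ne'
    simp only [Pi.div_apply, hf]
    rw [div_pow, div_pow, mul_pow ((m:ℝ)+1) θ, mul_pow ((m:ℝ)+2) θ]
    field_simp
    ring
  -- limit at b
  have hT : Tendsto f (𝓝[<] b) atTop := by
    have hnumc : Continuous (fun θ : ℝ => Real.sin θ * Real.sin (((m:ℝ)+1)*θ) ^ (m+1)) := by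
      fun_prop
    have hnum : Tendsto (fun θ : ℝ => Real.sin θ * Real.sin (((m:ℝ)+1)*θ) ^ (m+1))
        (𝓝[<] b) (𝓝 (Real.sin b * Real.sin (((m:ℝ)+1)*b) ^ (m+1))) :=
      (hnumc.tendsto b).mono_left nhdsWithin_le_nhds
    have hbπ : b < π := by
      rw [hbdef]
      apply div_lt_self pi_pos (by linarith)
    have hApos : 0 < Real.sin b * Real.sin (((m:ℝ)+1)*b) ^ (m+1) := by
      apply mul_pos (Real.sin_pos_of_pos_of_lt_pi hb0 hbπ)
      apply pow_pos
      apply Real.sin_pos_of_pos_of_lt_pi (mul_pos hc hb0)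
      calc ((m:ℝ)+1)*b < ((m:ℝ)+2)*b := by nlinarith
        _ = π := hRb
    have hden : Tendsto (fun θ : ℝ => Real.sin (((m:ℝ)+2)*θ) ^ (m+2))
        (𝓝[<] b) (𝓝[>] (0:ℝ)) := by
      rw [tendsto_nhdsWithin_iff]
      constructor
      · have hctz : Continuous (fun θ : ℝ => Real.sin (((m:ℝ)+2)*θ) ^ (m+2)) := by fun_prop
        have h0 : Real.sin (((m:ℝ)+2)*b) = 0 := by rw [hRb, Real.sin_pi]
        have := (hctz.tendsto b).mono_left (nhdsWithin_le_nhds (s := Iio b))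
        simpa [h0] using this
      · filter_upwards [Ioo_mem_nhdsLT hb0] with θ hθ
        exact pow_pos (key θ hθ).2.2 _
    have hinv : Tendsto (fun θ : ℝ => (Real.sin (((m:ℝ)+2)*θ) ^ (m+2))⁻¹)
        (𝓝[<] b) atTop := tendsto_inv_nhdsGT_zero.comp hden
    have := hnum.pos_mul_atTop hApos hinv
    refine this.congr (fun θ => ?_)
    simp only [hf]
    rw [div_eq_mul_inv]
  -- image
  ext y
  simp only [Set.mem_image, Set.mem_Ioi]
  constructor
  · rintro ⟨θ, hθ, rfl⟩
    have hhalf : θ/2 ∈ Ioo (0:ℝ) b := ⟨by linarith [hθ.1], by linarith [hθ.1, hθ.2]⟩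
    have hle : L ≤ f (θ/2) := by
      refine le_of_tendsto hL ?_
      filter_upwards [Ioo_mem_nhdsGT (half_pos hθ.1)] with t ht
      exact (hmono ⟨ht.1, lt_trans ht.2 hhalf.2⟩ hhalf ht.2).le
    exact lt_of_le_of_lt hle (hmono hhalf hθ (by linarith [hθ.1]))
  · intro hy
    have e1 : ∀ᶠ t in 𝓝[>] (0:ℝ), f t < y := hL.eventually_lt_const hy
    have e2 : ∀ᶠ t in 𝓝[>] (0:ℝ), t ∈ Ioo (0:ℝ) b :=
      eventually_of_mem (Ioo_mem_nhdsGT hb0) (fun t ht => ht)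
    obtain ⟨t1, ht1, ht1y⟩ := (e2.and e1).exists
    have e3 : ∀ᶠ t in 𝓝[<] b, y ≤ f t := hT.eventually_ge_atTop y
    have e4 : ∀ᶠ t in 𝓝[<] b, t ∈ Ioo (0:ℝ) b :=
      eventually_of_mem (Ioo_mem_nhdsLT hb0) (fun t ht => ht)
    obtain ⟨t2, ht2, ht2y⟩ := (e4.and e3).exists
    have h12 : t1 < t2 := by
      by_contra h
      push_neg at h
      rcases eq_or_lt_of_le h with rfl | hlt
      · linarith
      · have := hmono ht2 ht1 hlt
        linarith
    have hsub : Icc t1 t2 ⊆ Ioo (0:ℝ) b :=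
      fun x hx => ⟨lt_of_lt_of_le ht1.1 hx.1, lt_of_le_of_lt hx.2 ht2.2⟩
    obtain ⟨θ, hθmem, hθy⟩ := intermediate_value_Icc h12.le (hcont.mono hsub)
      ⟨ht1y.le, ht2y⟩
    exact ⟨θ, hsub hθmem, hθy⟩

theorem stmt_8 (r : ℕ) (hr : 2 ≤ r) (z : ℝ → ℝ)
    (hz : ∀ θ, z θ = Real.sin θ * (Real.sin (((r : ℝ) - 1) * θ)) ^ (r - 1) /
        (Real.sin (r * θ)) ^ r) :
    StrictMonoOn z (Set.Ioo 0 (π / r)) ∧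
    z '' Set.Ioo 0 (π / r) = Set.Ioi (((r : ℝ) - 1) ^ (r - 1) / (r : ℝ) ^ r) := by
  obtain ⟨m, rfl⟩ : ∃ m, r = m + 2 := ⟨r - 2, by omega⟩
  have hzf : z = fun θ : ℝ => Real.sin θ * Real.sin (((m:ℝ)+1)*θ) ^ (m+1) /
      Real.sin (((m:ℝ)+2)*θ) ^ (m+2) := by
    funext θ
    rw [hz]
    norm_num
    ring_nf
  have hb : π / ((m+2 : ℕ) : ℝ) = π / ((m:ℝ)+2) := by push_cast; ring_nf
  have hLeq : (((m+2 : ℕ) : ℝ) - 1) ^ (m+2-1) / ((m+2:ℕ) : ℝ) ^ (m+2)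
      = ((m:ℝ)+1) ^ (m+1) / ((m:ℝ)+2) ^ (m+2) := by
    push_cast
    rw [show ((m:ℝ)+2-1) = (m:ℝ)+1 by ring]
  rw [hzf, hb, hLeq]
  exact aux8 m
end

section
/- Let n, r ∈ ℕ with max{n,r} > 1, θ ∈ (0, π/r), and φ = ((n-1)π + rθ)/n. If z = (sin^n θ)/(sin^{n-r}(φ-θ) · sin^r φ) and t = (sin φ / sin(φ-θ)) e^{-iθ}, then (1-t)^n + z t^r = 0; moreover (1-t)^n = -(sin^n θ) e^{-irθ} / sin^n(φ-θ). -/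
open Real Complex

theorem stmt_9 (n r : ℕ) (hn : 0 < n) (hr : 0 < r) (hmax : 1 < max n r)
    (θ : ℝ) (hθ : θ ∈ Set.Ioo 0 (π / r)) (φ : ℝ)
    (hφ : φ = (((n : ℝ) - 1) * π + r * θ) / n) (z : ℝ)
    (hz : z = (Real.sin θ) ^ n /
        ((Real.sin (φ - θ)) ^ ((n : ℤ) - (r : ℤ)) * (Real.sin φ) ^ r))
    (t : ℂ)
    (ht : t = ((Real.sin φ / Real.sin (φ - θ) : ℝ) : ℂ) * Complex.exp (-θ * Complex.I)) :
    (1 - t) ^ n + (z : ℂ) * t ^ r = 0 ∧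
    (1 - t) ^ n = -((Real.sin θ : ℂ) ^ n * Complex.exp (-(r : ℂ) * θ * Complex.I) /
        (Real.sin (φ - θ) : ℂ) ^ n) := by
  obtain ⟨hθ0, hθπ⟩ := hθ
  have hr1 : (1:ℝ) ≤ r := by exact_mod_cast hr
  have hn1 : (1:ℝ) ≤ n := by exact_mod_cast hn
  have hn0 : (0:ℝ) < n := by exact_mod_cast hn
  have hθπ' : θ < π := lt_of_lt_of_le hθπ (div_le_self Real.pi_pos.le hr1)
  have ha : 0 < Real.sin θ := Real.sin_pos_of_pos_of_lt_pi hθ0 hθπ'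
  have hrθ : (r:ℝ) * θ < π := by
    have := (lt_div_iff₀ (show (0:ℝ) < r by positivity)).mp hθπ
    linarith
  have hφn : (n:ℝ) * φ = ((n:ℝ) - 1) * π + r * θ := by
    rw [hφ]; field_simp
  have hφπ : φ < π := by nlinarith [Real.pi_pos]
  have hφ0 : 0 < φ := by
    nlinarith [Real.pi_pos, mul_pos (show (0:ℝ) < r by positivity) hθ0]
  have hc : 0 < Real.sin φ := Real.sin_pos_of_pos_of_lt_pi hφ0 hφπ
  have hψ0 : 0 < φ - θ := by
    have key : (n:ℝ) * (φ - θ) = ((n:ℝ) - 1) * (π - θ) + ((r:ℝ) - 1) * θ := by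
      rw [mul_sub, hφn]; ring
    rcases lt_max_iff.mp hmax with h | h
    · have : (1:ℝ) < n := by exact_mod_cast h
      nlinarith
    · have : (1:ℝ) < r := by exact_mod_cast h
      nlinarith
  have hb : 0 < Real.sin (φ - θ) :=
    Real.sin_pos_of_pos_of_lt_pi hψ0 (by linarith)
  set a := Real.sin θ with ha'
  set b := Real.sin (φ - θ) with hb'
  set c := Real.sin φ with hc'
  have hbC : (b:ℂ) ≠ 0 := by exact_mod_cast hb.ne'
  have hcC : (c:ℂ) ≠ 0 := by exact_mod_cast hc.ne'
  have hbs : b = c * Real.cos θ - Real.cos φ * a := by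
    rw [hb', ha', hc', Real.sin_sub]
  have hbsC : (b:ℂ) = (c:ℂ) * Complex.cos (θ:ℂ) - Complex.cos (φ:ℂ) * (a:ℂ) := by
    have := congrArg (Complex.ofReal) hbs
    push_cast at this
    exact this
  -- key identity: (1 - t) * b = -a exp(-φ i)
  have h1 : (1 - t) = -(a:ℂ) * Complex.exp (-(φ:ℝ) * Complex.I) / (b:ℂ) := by
    rw [eq_div_iff hbC, ht]
    rw [show ((-(θ:ℂ)) * Complex.I) = ((-θ : ℝ) : ℂ) * Complex.I by push_cast; ring,
        show ((-(φ:ℝ) : ℂ) * Complex.I) = ((-φ : ℝ) : ℂ) * Complex.I by push_cast; ring,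
        Complex.exp_mul_I, Complex.exp_mul_I]
    simp only [← Complex.ofReal_cos, ← Complex.ofReal_sin, Real.cos_neg, Real.sin_neg,
        ← ha', ← hc']
    push_cast
    field_simp
    linear_combination hbsC
  have h2 : (1 - t) ^ n = -((a:ℂ) ^ n * Complex.exp (-(r : ℂ) * θ * Complex.I) / (b:ℂ) ^ n) := by
    rw [h1, div_pow, neg_mul, neg_pow, mul_pow, ← Complex.exp_nat_mul]
    have hexp : Complex.exp ((n:ℂ) * (-(φ:ℝ) * Complex.I)) =
        (-1:ℂ) ^ ((n:ℤ) - 1) * Complex.exp (-(r : ℂ) * θ * Complex.I) := by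
      have hCn : (((n:ℝ) * φ : ℝ) : ℂ) = ((((n:ℝ) - 1) * π + r * θ : ℝ) : ℂ) :=
        congrArg (Complex.ofReal) hφn
      have harg : (n:ℂ) * (-(φ:ℝ) * Complex.I) =
          (((n:ℤ) - 1 : ℤ) : ℂ) * (-(π * Complex.I)) + (-(r : ℂ) * θ * Complex.I) := by
        push_cast at hCn ⊢
        linear_combination (-Complex.I) * hCn
      rw [harg, Complex.exp_add, Complex.exp_int_mul, Complex.exp_neg, Complex.exp_pi_mul_I]
      norm_num
    rw [hexp]
    have hpow : (-1:ℂ) ^ n * (-1:ℂ) ^ ((n:ℤ) - 1) = -1 := by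
      rw [← zpow_natCast (-1:ℂ) n, ← zpow_add₀ (by norm_num : (-1:ℂ) ≠ 0)]
      exact Odd.neg_one_zpow ⟨(n:ℤ) - 1, by ring⟩
    have : (-1:ℂ) ^ n * ((a:ℂ)^n * ((-1:ℂ) ^ ((n:ℤ)-1) * Complex.exp (-(r : ℂ) * θ * Complex.I))) / (b:ℂ)^n
        = ((-1:ℂ) ^ n * (-1:ℂ) ^ ((n:ℤ)-1)) * ((a:ℂ)^n * Complex.exp (-(r : ℂ) * θ * Complex.I) / (b:ℂ)^n) := by
      ring
    rw [this, hpow]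
    ring
  refine ⟨?_, h2⟩
  have h3 : (z : ℂ) * t ^ r = (a:ℂ) ^ n * Complex.exp (-(r : ℂ) * θ * Complex.I) / (b:ℂ) ^ n := by
    rw [eq_div_iff (pow_ne_zero n hbC), hz, ht, mul_pow, ← Complex.exp_nat_mul,
        show ((r:ℂ)) * (-(θ:ℂ) * Complex.I) = -(r:ℂ) * (θ:ℂ) * Complex.I by ring]
    set E := Complex.exp (-(r : ℂ) * (θ:ℂ) * Complex.I) with hE
    have hbz : ((b:ℂ)) ^ (n:ℕ) = (b:ℂ) ^ ((n:ℤ) - (r:ℤ)) * (b:ℂ) ^ (r:ℕ) := by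
      rw [← zpow_natCast (b:ℂ) r, ← zpow_add₀ hbC, ← zpow_natCast (b:ℂ) n]
      norm_num
    push_cast
    rw [hbz, div_pow]
    field_simp [zpow_ne_zero ((n:ℤ) - (r:ℤ)) hbC]
  rw [h2, h3]
  ring
end

section
/- Let n, r ∈ ℕ with max{n,r} > 1, θ ∈ (0, π/r), and φ = ((n-1)π + rθ)/n. The complex numbers ζ = e^{iθ} and ζ = e^{-iθ} are roots of the polynomial Q(ζ) = (sin(φ-θ)/sin θ − ζ · sin φ/sin θ)^n + ζ^r. -/
open Real Complex

lemma key_bracket (θ φ : ℝ) (hs : Real.sin θ ≠ 0) :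
    ((Real.sin (φ - θ) / Real.sin θ : ℝ) : ℂ)
      - Complex.exp (θ * Complex.I) * ((Real.sin φ / Real.sin θ : ℝ) : ℂ)
      = -Complex.exp (φ * Complex.I) := by
  have hs' : (Real.sin θ : ℂ) ≠ 0 := by exact_mod_cast hs
  have h : ((Real.sin (φ - θ) : ℝ) : ℂ)
      - Complex.exp (θ * Complex.I) * ((Real.sin φ : ℝ) : ℂ)
      = -Complex.exp (φ * Complex.I) * ((Real.sin θ : ℝ) : ℂ) := by
    push_cast
    simp only [Complex.sin, sub_mul, neg_mul, neg_sub, Complex.exp_sub, Complex.exp_neg]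
    field_simp [Complex.exp_ne_zero]
    ring
  push_cast at h ⊢
  have hs'' : Complex.sin θ ≠ 0 := by
    rw [← Complex.ofReal_sin]; exact_mod_cast hs
  field_simp
  linear_combination h

theorem stmt_10 (n r : ℕ) (hn : 0 < n) (hr : 0 < r) (hmax : 1 < max n r)
    (θ : ℝ) (hθ : θ ∈ Set.Ioo 0 (π / r)) (φ : ℝ)
    (hφ : φ = (((n : ℝ) - 1) * π + r * θ) / n) (Q : ℂ → ℂ)
    (hQ : ∀ ζ, Q ζ = (((Real.sin (φ - θ) / Real.sin θ : ℝ) : ℂ)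
        - ζ * ((Real.sin φ / Real.sin θ : ℝ) : ℂ)) ^ n + ζ ^ r) :
    Q (Complex.exp (θ * Complex.I)) = 0 ∧ Q (Complex.exp (-θ * Complex.I)) = 0 := by
  obtain ⟨hθ0, hθr⟩ := hθ
  have hrR : (1 : ℝ) ≤ r := by exact_mod_cast hr
  have hθπ : θ < π := lt_of_lt_of_le hθr (div_le_self Real.pi_pos.le hrR)
  have hs : Real.sin θ ≠ 0 := ne_of_gt (Real.sin_pos_of_pos_of_lt_pi hθ0 hθπ)
  have hn' : (n : ℝ) ≠ 0 := Nat.cast_ne_zero.mpr hn.ne'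
  have hnφ : (n : ℝ) * φ = ((n : ℝ) - 1) * π + r * θ := by rw [hφ]; field_simp
  have hnφC : (n : ℂ) * φ = ((n : ℂ) - 1) * π + r * θ := by exact_mod_cast hnφ
  constructor
  · rw [hQ, key_bracket θ φ hs]
    have h2 : Complex.exp (↑φ * Complex.I) ^ n = Complex.exp ((n : ℂ) * (↑φ * Complex.I)) := by
      rw [Complex.exp_nat_mul]
    have h3 : (n : ℂ) * (↑φ * Complex.I) = (n : ℂ) * (↑π * Complex.I) + (-(↑π * Complex.I)) + (r : ℂ) * (↑θ * Complex.I) := by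
      rw [show (n : ℂ) * (↑φ * Complex.I) = ((n : ℂ) * φ) * Complex.I by ring, hnφC]; ring
    rw [neg_pow, h2, h3, Complex.exp_add, Complex.exp_add, Complex.exp_neg,
      Complex.exp_nat_mul, Complex.exp_nat_mul, Complex.exp_pi_mul_I]
    have h4 : ((-1 : ℂ)) ^ n * (((-1 : ℂ)) ^ n) = 1 := by rw [← mul_pow]; norm_num
    linear_combination -Complex.exp (↑θ * Complex.I) ^ r * h4
  · rw [hQ]
    have hb := key_bracket (-θ) (-φ) (by simpa [Real.sin_neg] using hs)
    have hsimp : Real.sin (-φ - -θ) / Real.sin (-θ) = Real.sin (φ - θ) / Real.sin θ := by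
      rw [show (-φ - -θ : ℝ) = -(φ - θ) by ring, Real.sin_neg, Real.sin_neg, neg_div_neg_eq]
    have hsimp2 : Real.sin (-φ) / Real.sin (-θ) = Real.sin φ / Real.sin θ := by
      rw [Real.sin_neg, Real.sin_neg, neg_div_neg_eq]
    rw [hsimp, hsimp2] at hb
    have hcast : ((-θ : ℝ) : ℂ) * Complex.I = -↑θ * Complex.I := by push_cast; ring
    rw [hcast] at hb
    rw [hb]
    have h2 : Complex.exp (↑(-φ : ℝ) * Complex.I) ^ n = Complex.exp ((n : ℂ) * (↑(-φ : ℝ) * Complex.I)) := by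
      rw [Complex.exp_nat_mul]
    have h3 : (n : ℂ) * (↑(-φ : ℝ) * Complex.I) = -((n : ℂ) * (↑π * Complex.I)) + ↑π * Complex.I + (r : ℂ) * (-↑θ * Complex.I) := by
      push_cast
      rw [show (n : ℂ) * (-↑φ * Complex.I) = -(((n : ℂ) * φ) * Complex.I) by ring, hnφC]; ring
    rw [neg_pow, h2, h3, Complex.exp_add, Complex.exp_add, Complex.exp_neg, Complex.exp_nat_mul,
      Complex.exp_pi_mul_I, Complex.exp_nat_mul]
    have h4 : ((-1 : ℂ)) ^ n * (((-1 : ℂ)) ^ n)⁻¹ = 1 := by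
      apply mul_inv_cancel₀; apply pow_ne_zero; norm_num
    linear_combination -Complex.exp (-↑θ * Complex.I) ^ r * h4
end

section
/- Let n, r ∈ ℕ with max{n,r} > 1, θ ∈ (0, π/r), and φ = ((n-1)π + rθ)/n. The polynomial Q(ζ) = (sin(φ-θ)/sin θ − ζ sin φ/sin θ)^n + ζ^r has exactly two zeros on the unit circle |ζ| = 1 (namely e^{iθ} and e^{-iθ}), and all its other zeros ζ satisfy |ζ| > 1. -/
set_option maxHeartbeats 1000000

open Real Complex


lemma key_ineq (n r : ℕ) (hn : 1 ≤ n) (hr : 1 ≤ r) (hnr : ¬(n = 1 ∧ r = 1))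
    (θ ψ : ℝ) (hθ0 : 0 < θ) (hψ0 : 0 < ψ) (hsum : (n : ℝ) * ψ + r * θ = π)
    (σ : ℝ) (h0 : 0 < σ) (h1 : σ ≤ 1) :
    Real.sin ψ * σ ^ n < Real.sin (θ + ψ) + Real.sin θ * σ ^ r := by
  have hnR : (1:ℝ) ≤ n := by exact_mod_cast hn
  have hrR : (1:ℝ) ≤ r := by exact_mod_cast hr
  have hθπ : θ < π := by nlinarith
  have hψπ : ψ < π := by nlinarith
  have hsθ : 0 < Real.sin θ := Real.sin_pos_of_pos_of_lt_pi hθ0 hθπ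
  have hsψ : 0 < Real.sin ψ := Real.sin_pos_of_pos_of_lt_pi hψ0 hψπ
  have hσr : 0 < σ ^ r := pow_pos h0 r
  by_cases hc : θ + 2*ψ ≤ π
  · -- easy case : sin (θ+ψ) ≥ sin ψ
    have hds := Real.sin_sub_sin (θ + ψ) ψ
    have harg1 : (θ + ψ - ψ)/2 = θ/2 := by ring
    have harg2 : (θ + ψ + ψ)/2 = (θ + 2*ψ)/2 := by ring
    rw [harg1, harg2] at hds
    have hcos : 0 ≤ Real.cos ((θ + 2*ψ)/2) :=
      Real.cos_nonneg_of_mem_Icc ⟨by linarith, by linarith⟩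
    have hsin : 0 ≤ Real.sin (θ/2) :=
      Real.sin_nonneg_of_nonneg_of_le_pi (by linarith) (by linarith)
    have hge : Real.sin ψ ≤ Real.sin (θ + ψ) := by nlinarith
    have hσn : σ ^ n ≤ 1 := pow_le_one₀ h0.le h1
    nlinarith [mul_le_of_le_one_right hsψ.le hσn, mul_pos hsθ hσr]
  · -- hard case: n = 1
    push_neg at hc
    have hn1 : n = 1 := by
      by_contra h
      have h2 : (2:ℝ) ≤ n := by exact_mod_cast (by omega : 2 ≤ n)
      nlinarith
    subst hn1
    have hr2 : 2 ≤ r := by omega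
    have hr2R : (2:ℝ) ≤ r := by exact_mod_cast hr2
    have hrpos : (0:ℝ) < r := by linarith
    have hψeq : ψ = π - r*θ := by push_cast at hsum; linarith
    have hrθ0 : 0 < (r:ℝ)*θ := by positivity
    have hrθπ : (r:ℝ)*θ < π := by rw [hψeq] at hψ0; linarith
    have hsr : 0 < Real.sin ((r:ℝ)*θ) := Real.sin_pos_of_pos_of_lt_pi hrθ0 hrθπ
    have e1 : Real.sin ψ = Real.sin ((r:ℝ)*θ) := by rw [hψeq, Real.sin_pi_sub]
    have e2 : Real.sin (θ + ψ) = Real.sin ((r:ℝ)*θ - θ) := by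
      rw [show θ + ψ = π - ((r:ℝ)*θ - θ) by rw [hψeq]; ring, Real.sin_pi_sub]
    rw [e1, e2, pow_one]
    -- Bernoulli: r*σ ≤ σ^r + r - 1
    have hber : 1 + (r:ℝ) * (σ - 1) ≤ σ ^ r := by
      have := one_add_mul_le_pow (show (-2:ℝ) ≤ σ - 1 by linarith) r
      calc 1 + (r:ℝ)*(σ-1) ≤ (1 + (σ-1))^r := this
        _ = σ ^ r := by ring_nf
    -- strict concavity: sin(rθ)/r < sin θ
    have hmem0 : (0:ℝ) ∈ Set.Icc (0:ℝ) π := ⟨le_rfl, Real.pi_pos.le⟩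
    have hmemr : (r:ℝ)*θ ∈ Set.Icc (0:ℝ) π := ⟨hrθ0.le, hrθπ.le⟩
    have hc1 : Real.sin ((r:ℝ)*θ) < r * Real.sin θ := by
      have h := strictConcaveOn_sin_Icc.2 hmem0 hmemr (ne_of_lt hrθ0)
        (show (0:ℝ) < 1 - 1/r by rw [sub_pos, div_lt_one hrpos]; linarith)
        (show (0:ℝ) < 1/r by positivity) (by field_simp; ring)
      simp only [smul_eq_mul, Real.sin_zero, mul_zero, zero_add] at h
      rw [show (1/(r:ℝ)) * ((r:ℝ)*θ) = θ by field_simp] at h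
      calc Real.sin ((r:ℝ)*θ) = r * ((1/(r:ℝ)) * Real.sin ((r:ℝ)*θ)) := by field_simp
        _ < r * Real.sin θ := by
            apply mul_lt_mul_of_pos_left _ hrpos
            linarith
    have hc2 : (1 - 1/(r:ℝ)) * Real.sin ((r:ℝ)*θ) ≤ Real.sin ((r:ℝ)*θ - θ) := by
      have h := strictConcaveOn_sin_Icc.concaveOn.2 hmem0 hmemr
        (show (0:ℝ) ≤ 1/r by positivity)
        (show (0:ℝ) ≤ 1 - 1/r by rw [sub_nonneg, div_le_one hrpos]; linarith)
        (by field_simp; ring)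
      simp only [smul_eq_mul, Real.sin_zero, mul_zero, zero_add] at h
      rw [show (1 - 1/(r:ℝ)) * ((r:ℝ)*θ) = (r:ℝ)*θ - θ by field_simp] at h
      linarith
    -- assemble
    have hb1 : (r:ℝ) * σ ≤ σ ^ r + r - 1 := by linarith
    have t1 : Real.sin ((r:ℝ)*θ) * ((r:ℝ)*σ) ≤ Real.sin ((r:ℝ)*θ) * (σ^r + r - 1) :=
      mul_le_mul_of_nonneg_left hb1 hsr.le
    have t2 : Real.sin ((r:ℝ)*θ) * σ^r < ((r:ℝ) * Real.sin θ) * σ^r :=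
      mul_lt_mul_of_pos_right hc1 hσr
    have t3 : ((r:ℝ) - 1) * Real.sin ((r:ℝ)*θ) ≤ (r:ℝ) * Real.sin ((r:ℝ)*θ - θ) := by
      have := mul_le_mul_of_nonneg_left hc2 (le_of_lt hrpos)
      calc ((r:ℝ) - 1) * Real.sin ((r:ℝ)*θ) = (r:ℝ) * ((1 - 1/r) * Real.sin ((r:ℝ)*θ)) := by
            field_simp
        _ ≤ (r:ℝ) * Real.sin ((r:ℝ)*θ - θ) := this
    have hfin : (r:ℝ) * (Real.sin ((r:ℝ)*θ) * σ) < (r:ℝ) * (Real.sin ((r:ℝ)*θ - θ) + Real.sin θ * σ^r) := by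
      nlinarith [t1, t2, t3]
    have := (mul_lt_mul_iff_right₀ hrpos).mp hfin
    linarith


lemma pow_left_inj' {x y : ℝ} (hx : 0 ≤ x) (hy : 0 ≤ y) {n : ℕ} (hn : n ≠ 0)
    (h : x ^ n = y ^ n) : x = y :=
  (pow_left_strictMonoOn₀ hn).injOn hx hy h

lemma G_mono (n r : ℕ) (hn : 1 ≤ n) (hr : 1 ≤ r) (a b : ℝ) (ha : 0 < a) (hb : 0 < b)
    (hI : ∀ σ : ℝ, 0 < σ → σ ≤ 1 → b * σ ^ n < a + σ ^ r)
    (hII : ∀ σ : ℝ, 0 < σ → σ ≤ 1 → σ ^ r < a + b * σ ^ n)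
    (σ₀ : ℝ) (h00 : 0 < σ₀) (h01 : σ₀ < 1) (hf1 : a < b * σ₀ ^ n + σ₀ ^ r) :
    (n : ℝ) * Real.arccos ((a^2 + (σ₀^r)^2 - (b*σ₀^n)^2) / (2*a*σ₀^r))
      + (r : ℝ) * Real.arccos ((a^2 + (b*σ₀^n)^2 - (σ₀^r)^2) / (2*a*b*σ₀^n))
    < (n : ℝ) * Real.arccos ((a^2 + ((1:ℝ)^r)^2 - (b*(1:ℝ)^n)^2) / (2*a*(1:ℝ)^r))
      + (r : ℝ) * Real.arccos ((a^2 + (b*(1:ℝ)^n)^2 - ((1:ℝ)^r)^2) / (2*a*b*(1:ℝ)^n)) := by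
  obtain ⟨n', rfl⟩ : ∃ m, n = m + 1 := ⟨n - 1, by omega⟩
  obtain ⟨r', rfl⟩ : ∃ m, r = m + 1 := ⟨r - 1, by omega⟩
  have hmono : StrictMonoOn (fun σ : ℝ =>
      ((n'+1 : ℕ) : ℝ) * Real.arccos ((a^2 + (σ^(r'+1))^2 - (b*σ^(n'+1))^2) / (2*a*σ^(r'+1)))
      + ((r'+1 : ℕ) : ℝ) * Real.arccos ((a^2 + (b*σ^(n'+1))^2 - (σ^(r'+1))^2) / (2*a*b*σ^(n'+1))))
      (Set.Icc σ₀ 1) := by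
    apply strictMonoOn_of_deriv_pos (convex_Icc σ₀ 1)
    · -- continuity
      have hpos : ∀ x ∈ Set.Icc σ₀ 1, 0 < x := fun x hx => lt_of_lt_of_le h00 hx.1
      apply ContinuousOn.add
      · apply ContinuousOn.mul continuousOn_const
        apply Real.continuous_arccos.comp_continuousOn
        exact ContinuousOn.div (by fun_prop) (by fun_prop)
          (fun x hx => by have := hpos x hx; positivity)
      · apply ContinuousOn.mul continuousOn_const
        apply Real.continuous_arccos.comp_continuousOn
        exact ContinuousOn.div (by fun_prop) (by fun_prop)
          (fun x hx => by have := hpos x hx; positivity)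
    · intro x hx
      rw [interior_Icc] at hx
      obtain ⟨hxl, hxr⟩ := hx
      have hx0 : 0 < x := h00.trans hxl
      have f1 : a < b * x ^ (n'+1) + x ^ (r'+1) := by
        have h1 : σ₀ ^ (n'+1) ≤ x ^ (n'+1) := pow_le_pow_left₀ h00.le hxl.le _
        have h2 : σ₀ ^ (r'+1) ≤ x ^ (r'+1) := pow_le_pow_left₀ h00.le hxl.le _
        have h3 : b * σ₀ ^ (n'+1) ≤ b * x ^ (n'+1) := mul_le_mul_of_nonneg_left h1 hb.le
        linarith
      have f2 := hI x hx0 hxr.le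
      have f3 := hII x hx0 hxr.le
      set p : ℝ := b * x ^ (n'+1) with hpdef
      set q : ℝ := x ^ (r'+1) with hqdef
      have hp : (0:ℝ) < p := by rw [hpdef]; positivity
      have hq : (0:ℝ) < q := by rw [hqdef]; positivity
      have hDu : (0:ℝ) < 2*a*q := by positivity
      have hDv : (0:ℝ) < 2*a*b*x^(n'+1) := by positivity
      have hbxp : 2*a*b*x^(n'+1) = 2*a*p := by rw [hpdef]; ring
      -- cosine bounds
      have hsq1 : (a - q)^2 < p^2 := by
        have := sq_lt_sq' (by linarith : -p < a - q) (by linarith : a - q < p)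
        exact this
      have hsq2 : p^2 < (a + q)^2 := by
        have := sq_lt_sq' (by linarith : -(a+q) < p) (by linarith : p < a + q)
        exact this
      have hsq3 : (a - p)^2 < q^2 := by
        have := sq_lt_sq' (by linarith : -q < a - p) (by linarith : a - p < q)
        exact this
      have hsq4 : q^2 < (a + p)^2 := by
        have := sq_lt_sq' (by linarith : -(a+p) < q) (by linarith : q < a + p)
        exact this
      have e1 : (a - q)^2 = a^2 - 2*a*q + q^2 := by ring
      have e2 : (a + q)^2 = a^2 + 2*a*q + q^2 := by ring
      have e3 : (a - p)^2 = a^2 - 2*a*p + p^2 := by ring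
      have e4 : (a + p)^2 = a^2 + 2*a*p + p^2 := by ring
      rw [e1] at hsq1; rw [e2] at hsq2; rw [e3] at hsq3; rw [e4] at hsq4
      have hu1 : (a^2 + q^2 - p^2) / (2*a*q) < 1 := by
        rw [div_lt_one hDu]; linarith
      have hu2 : -1 < (a^2 + q^2 - p^2) / (2*a*q) := by
        rw [lt_div_iff₀ hDu]; linarith
      have hv1 : (a^2 + p^2 - q^2) / (2*a*b*x^(n'+1)) < 1 := by
        rw [div_lt_one hDv, hbxp]; linarith
      have hv2 : -1 < (a^2 + p^2 - q^2) / (2*a*b*x^(n'+1)) := by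
        rw [lt_div_iff₀ hDv, hbxp]; linarith
      set ux : ℝ := (a^2 + q^2 - p^2) / (2*a*q) with huxdef
      set vx : ℝ := (a^2 + p^2 - q^2) / (2*a*b*x^(n'+1)) with hvxdef
      have h1u : 0 < 1 - ux^2 := by
        have h := mul_pos (by linarith : (0:ℝ) < 1 - ux) (by linarith : (0:ℝ) < 1 + ux)
        have e : (1 - ux)*(1 + ux) = 1 - ux^2 := by ring
        linarith [e ▸ h]
      have h1v : 0 < 1 - vx^2 := by
        have h := mul_pos (by linarith : (0:ℝ) < 1 - vx) (by linarith : (0:ℝ) < 1 + vx)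
        have e : (1 - vx)*(1 + vx) = 1 - vx^2 := by ring
        linarith [e ▸ h]
      set SA : ℝ := Real.sqrt (1 - ux^2) with hSAdef
      set SB : ℝ := Real.sqrt (1 - vx^2) with hSBdef
      have hSA : 0 < SA := Real.sqrt_pos.mpr h1u
      have hSB : 0 < SB := Real.sqrt_pos.mpr h1v
      have hSA2 : SA^2 = 1 - ux^2 := Real.sq_sqrt h1u.le
      have hSB2 : SB^2 = 1 - vx^2 := Real.sq_sqrt h1v.le
      have hrel : q * SA = p * SB := by
        have hsq : (q*SA)^2 = (p*SB)^2 := by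
          rw [mul_pow, mul_pow, hSA2, hSB2, huxdef, hvxdef, hbxp]
          field_simp
          ring
        exact pow_left_inj' (by positivity) (by positivity) two_ne_zero hsq
      -- derivatives
      have hQd : HasDerivAt (fun σ : ℝ => σ^(r'+1)) (((r'+1:ℕ):ℝ)*x^r') x := by
        simpa using hasDerivAt_pow (r'+1) x
      have hNd : HasDerivAt (fun σ : ℝ => σ^(n'+1)) (((n'+1:ℕ):ℝ)*x^n') x := by
        simpa using hasDerivAt_pow (n'+1) x
      have hPd : HasDerivAt (fun σ : ℝ => b*σ^(n'+1)) (b*(((n'+1:ℕ):ℝ)*x^n')) x :=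
        hNd.const_mul b
      set DU : ℝ := (((r'+1:ℕ):ℝ)*(q^2+p^2-a^2) - 2*((n'+1:ℕ):ℝ)*p^2)/(2*a*q*x) with hDUdef
      set DV : ℝ := (((n'+1:ℕ):ℝ)*(q^2+p^2-a^2) - 2*((r'+1:ℕ):ℝ)*q^2)/(2*a*p*x) with hDVdef
      have hU : HasDerivAt (fun σ : ℝ =>
          (a^2 + (σ^(r'+1))^2 - (b*σ^(n'+1))^2)/(2*a*σ^(r'+1))) DU x := by
        have h := (((hQd.pow 2).const_add (a^2)).sub (hPd.pow 2)).div
          (hQd.const_mul (2*a)) (by positivity : (0:ℝ) < 2*a*x^(r'+1)).ne'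
        refine h.congr_deriv ?_
        rw [hDUdef, hpdef, hqdef]
        norm_num
        field_simp
        ring
      have hV : HasDerivAt (fun σ : ℝ =>
          (a^2 + (b*σ^(n'+1))^2 - (σ^(r'+1))^2)/(2*a*b*σ^(n'+1))) DV x := by
        have h := (((hPd.pow 2).const_add (a^2)).sub (hQd.pow 2)).div
          (hNd.const_mul (2*a*b)) (by positivity : (0:ℝ) < 2*a*b*x^(n'+1)).ne'
        refine h.congr_deriv ?_
        rw [hDVdef, hpdef, hqdef]
        norm_num
        field_simp
        ring
      have hA1 : HasDerivAt (fun σ : ℝ =>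
          Real.arccos ((a^2 + (σ^(r'+1))^2 - (b*σ^(n'+1))^2)/(2*a*σ^(r'+1))))
          (-(1/SA) * DU) x := by
        have h := (Real.hasDerivAt_arccos hu2.ne' hu1.ne).comp x hU
        simpa [Function.comp_def, hSAdef] using h
      have hA2 : HasDerivAt (fun σ : ℝ =>
          Real.arccos ((a^2 + (b*σ^(n'+1))^2 - (σ^(r'+1))^2)/(2*a*b*σ^(n'+1))))
          (-(1/SB) * DV) x := by
        have h := (Real.hasDerivAt_arccos hv2.ne' hv1.ne).comp x hV
        simpa [Function.comp_def, hSBdef] using h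
      have hf : HasDerivAt (fun σ : ℝ =>
          ((n'+1 : ℕ) : ℝ) * Real.arccos ((a^2 + (σ^(r'+1))^2 - (b*σ^(n'+1))^2) / (2*a*σ^(r'+1)))
          + ((r'+1 : ℕ) : ℝ) * Real.arccos ((a^2 + (b*σ^(n'+1))^2 - (σ^(r'+1))^2) / (2*a*b*σ^(n'+1))))
          (((n'+1:ℕ):ℝ) * (-(1/SA) * DU) + ((r'+1:ℕ):ℝ) * (-(1/SB) * DV)) x :=
        (hA1.const_mul _).add (hA2.const_mul _)
      rw [hf.deriv]
      -- positivity of the derivative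
      have hNc : (1:ℝ) ≤ ((n'+1:ℕ):ℝ) := by exact_mod_cast Nat.one_le_iff_ne_zero.mpr (by omega)
      have hRc : (1:ℝ) ≤ ((r'+1:ℕ):ℝ) := by exact_mod_cast Nat.one_le_iff_ne_zero.mpr (by omega)
      have hNR1 : (1:ℝ) ≤ ((n'+1:ℕ):ℝ)*((r'+1:ℕ):ℝ) := by
        calc (1:ℝ) = 1*1 := by norm_num
          _ ≤ ((n'+1:ℕ):ℝ)*((r'+1:ℕ):ℝ) :=
            mul_le_mul hNc hRc zero_le_one (le_trans zero_le_one hNc)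
      set K : ℝ := ((n'+1:ℕ):ℝ)^2*p^2 + ((r'+1:ℕ):ℝ)^2*q^2
        - ((n'+1:ℕ):ℝ)*((r'+1:ℕ):ℝ)*(p^2+q^2-a^2) with hKdef
      have hX : 0 < (a + q - p)*(a + p - q) := mul_pos (by linarith) (by linarith)
      have hK : 0 < K := by
        have eK : K = (((n'+1:ℕ):ℝ)*p - ((r'+1:ℕ):ℝ)*q)^2
            + (((n'+1:ℕ):ℝ)*((r'+1:ℕ):ℝ))*((a + q - p)*(a + p - q)) := by
          rw [hKdef]; ring
        have h2 : 1*((a + q - p)*(a + p - q)) ≤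
            (((n'+1:ℕ):ℝ)*((r'+1:ℕ):ℝ))*((a + q - p)*(a + p - q)) :=
          mul_le_mul_of_nonneg_right hNR1 hX.le
        have h3 := sq_nonneg (((n'+1:ℕ):ℝ)*p - ((r'+1:ℕ):ℝ)*q)
        rw [eK]; linarith
      have hexp : ((n'+1:ℕ):ℝ) * (-(1/SA) * DU) + ((r'+1:ℕ):ℝ) * (-(1/SB) * DV)
          = K/(a*x*q*SA) := by
        have hSB' : SB = q*SA/p := by rw [eq_div_iff hp.ne']; linarith [hrel]
        rw [hSB', hDUdef, hDVdef, hKdef]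
        field_simp
        ring
      rw [hexp]
      exact div_pos hK (by positivity)
  have h1mem : (1:ℝ) ∈ Set.Icc σ₀ 1 := ⟨h01.le, le_rfl⟩
  have h0mem : σ₀ ∈ Set.Icc σ₀ 1 := ⟨le_rfl, h01.le⟩
  exact hmono h0mem h1mem h01

lemma nth_root_aux {x : ℝ} (n : ℕ) (hn : n ≠ 0) (h0 : 0 < x) (h1 : x < 1) :
    ∃ σ : ℝ, 0 < σ ∧ σ < 1 ∧ σ ^ n = x := by
  refine ⟨x ^ ((n:ℝ)⁻¹), Real.rpow_pos_of_pos h0 _, Real.rpow_lt_one h0.le h1 (by positivity), ?_⟩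
  rw [← Real.rpow_natCast (x ^ ((n:ℝ)⁻¹)) n, ← Real.rpow_mul h0.le,
    inv_mul_cancel₀ (by exact_mod_cast hn : (n:ℝ) ≠ 0), Real.rpow_one]

theorem stmt_11 (n r : ℕ) (hn : 0 < n) (hr : 0 < r) (hmax : 1 < max n r)
    (θ : ℝ) (hθ : θ ∈ Set.Ioo 0 (π / r)) (φ : ℝ)
    (hφ : φ = (((n : ℝ) - 1) * π + r * θ) / n) (Q : ℂ → ℂ)
    (hQ : ∀ ζ, Q ζ = (((Real.sin (φ - θ) / Real.sin θ : ℝ) : ℂ)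
        - ζ * ((Real.sin φ / Real.sin θ : ℝ) : ℂ)) ^ n + ζ ^ r) :
    Q (Complex.exp (θ * Complex.I)) = 0 ∧
    Q (Complex.exp (-θ * Complex.I)) = 0 ∧
    Complex.exp (θ * Complex.I) ≠ Complex.exp (-θ * Complex.I) ∧
    (∀ ζ : ℂ, Q ζ = 0 → ‖ζ‖ = 1 →
      ζ = Complex.exp (θ * Complex.I) ∨ ζ = Complex.exp (-θ * Complex.I)) ∧
    (∀ ζ : ℂ, Q ζ = 0 → ζ ≠ Complex.exp (θ * Complex.I) →
      ζ ≠ Complex.exp (-θ * Complex.I) → 1 < ‖ζ‖) := by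
  obtain ⟨hθ0, hθr⟩ := hθ
  have hrR : (1:ℝ) ≤ (r:ℝ) := by exact_mod_cast hr
  have hnR : (1:ℝ) ≤ (n:ℝ) := by exact_mod_cast hn
  have hn0 : (n:ℝ) ≠ 0 := by exact_mod_cast hn.ne'
  have hrpos : (0:ℝ) < r := by linarith
  have hrθπ : (r:ℝ)*θ < π := by
    have h := (lt_div_iff₀ hrpos).mp hθr
    linarith
  have hθπ : θ < π := by nlinarith
  have hsθ : 0 < Real.sin θ := Real.sin_pos_of_pos_of_lt_pi hθ0 hθπ
  set ψ : ℝ := (π - r*θ)/n with hψdef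
  have hψ0 : 0 < ψ := div_pos (by linarith) (by positivity)
  have hsum : (n:ℝ)*ψ + r*θ = π := by rw [hψdef]; field_simp; ring
  have hφeq : φ = π - ψ := by rw [hφ, hψdef]; field_simp; ring
  have hψπ : ψ < π := by
    have : ψ ≤ π - r*θ := by
      rw [hψdef]; exact div_le_self (by linarith) hnR
    nlinarith
  have hsψ : 0 < Real.sin ψ := Real.sin_pos_of_pos_of_lt_pi hψ0 hψπ
  -- the complex exponential identities
  have key1 : Complex.sin ((φ:ℂ) - (θ:ℂ)) - Complex.exp (θ*Complex.I) * Complex.sin (φ:ℂ)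
      = -Complex.exp (φ*Complex.I) * Complex.sin (θ:ℂ) := by
    rw [Complex.exp_mul_I, Complex.exp_mul_I, Complex.sin_sub]
    ring
  have key2 : Complex.sin ((φ:ℂ) - (θ:ℂ)) - Complex.exp (-((θ:ℂ)*Complex.I)) * Complex.sin (φ:ℂ)
      = -Complex.exp (-((φ:ℂ)*Complex.I)) * Complex.sin (θ:ℂ) := by
    rw [show -((θ:ℂ)*Complex.I) = (-(θ:ℂ))*Complex.I by ring,
      show -((φ:ℂ)*Complex.I) = (-(φ:ℂ))*Complex.I by ring,
      Complex.exp_mul_I, Complex.exp_mul_I, Complex.sin_sub, Complex.sin_neg, Complex.cos_neg,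
      Complex.sin_neg, Complex.cos_neg]
    ring
  have hsθC : Complex.sin (θ:ℂ) ≠ 0 := by
    rw [← Complex.ofReal_sin]; exact_mod_cast hsθ.ne'
  have e1 : ((Real.sin (φ - θ) / Real.sin θ : ℝ) : ℂ)
      - Complex.exp (θ*Complex.I) * ((Real.sin φ / Real.sin θ : ℝ) : ℂ)
      = -Complex.exp (φ*Complex.I) := by
    push_cast [Complex.ofReal_sin]
    field_simp
    linear_combination key1
  have e2 : ((Real.sin (φ - θ) / Real.sin θ : ℝ) : ℂ)
      - Complex.exp (-θ*Complex.I) * ((Real.sin φ / Real.sin θ : ℝ) : ℂ)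
      = -Complex.exp (-φ*Complex.I) := by
    simp only [neg_mul]
    push_cast [Complex.ofReal_sin]
    field_simp
    linear_combination key2
  have hnφ : (n:ℝ)*φ = ((n:ℝ)-1)*π + r*θ := by rw [hφ]; field_simp
  have hcastn : ((n:ℝ)-1 : ℝ) = ((n-1 : ℕ) : ℝ) := by
    have := Nat.cast_sub hn (R := ℝ)
    simp at this
    rw [this]
  have hodd : (-1:ℂ)^n * (-1:ℂ)^(n-1) = -1 := by
    rw [← pow_add]
    exact Odd.neg_one_pow ⟨n-1, by omega⟩
  have hexppos : Complex.exp (φ*Complex.I)^n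
      = (-1:ℂ)^(n-1) * Complex.exp (((r:ℝ)*θ : ℝ)*Complex.I) := by
    rw [← Complex.exp_nat_mul,
      show (n:ℂ) * ((φ:ℂ) * Complex.I) = (((n:ℝ)*φ : ℝ) : ℂ) * Complex.I by push_cast; ring,
      hnφ,
      show ((((n:ℝ)-1)*π + r*θ : ℝ) : ℂ) * Complex.I
        = ((n-1:ℕ):ℂ) * ((π:ℂ)*Complex.I) + (((r:ℝ)*θ : ℝ):ℂ)*Complex.I by
        push_cast [Nat.cast_sub hn]; ring,
      Complex.exp_add, Complex.exp_nat_mul, Complex.exp_pi_mul_I]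
  have hexpneg : Complex.exp (-φ*Complex.I)^n
      = (-1:ℂ)^(n-1) * Complex.exp (-((r:ℝ)*θ : ℝ)*Complex.I) := by
    have hmpi : Complex.exp (-((π:ℂ)*Complex.I)) = -1 := by
      rw [Complex.exp_neg, Complex.exp_pi_mul_I]; norm_num
    rw [← Complex.exp_nat_mul,
      show (n:ℂ) * (-(φ:ℂ) * Complex.I) = -((((n:ℝ)*φ : ℝ) : ℂ) * Complex.I) by push_cast; ring,
      hnφ,
      show -(((((n:ℝ)-1)*π + r*θ : ℝ) : ℂ) * Complex.I)
        = ((n-1:ℕ):ℂ) * (-((π:ℂ)*Complex.I)) + (-(((r:ℝ)*θ : ℝ):ℂ)*Complex.I) by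
        push_cast [Nat.cast_sub hn]; ring,
      Complex.exp_add, Complex.exp_nat_mul, hmpi]
  have hQpos : Q (Complex.exp (θ * Complex.I)) = 0 := by
    rw [hQ, e1, neg_pow, hexppos,
      show Complex.exp (θ*Complex.I)^r = Complex.exp (((r:ℝ)*θ : ℝ)*Complex.I) by
        rw [← Complex.exp_nat_mul]; congr 1; push_cast; ring]
    rw [show (-1:ℂ)^n * ((-1:ℂ)^(n-1) * Complex.exp (((r:ℝ)*θ : ℝ)*Complex.I))
        = ((-1:ℂ)^n * (-1:ℂ)^(n-1)) * Complex.exp (((r:ℝ)*θ : ℝ)*Complex.I) by ring, hodd]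
    ring
  have hQneg : Q (Complex.exp (-θ * Complex.I)) = 0 := by
    rw [hQ, e2, neg_pow, hexpneg,
      show Complex.exp (-θ*Complex.I)^r = Complex.exp (-((r:ℝ)*θ : ℝ)*Complex.I) by
        rw [← Complex.exp_nat_mul]; congr 1; push_cast; ring]
    rw [show (-1:ℂ)^n * ((-1:ℂ)^(n-1) * Complex.exp (-((r:ℝ)*θ : ℝ)*Complex.I))
        = ((-1:ℂ)^n * (-1:ℂ)^(n-1)) * Complex.exp (-((r:ℝ)*θ : ℝ)*Complex.I) by ring, hodd]
    ring

  -- ============ setup for parts 4 and 5 ============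
  set a : ℝ := Real.sin (φ - θ) / Real.sin θ with hadef
  set b : ℝ := Real.sin φ / Real.sin θ with hbdef
  have hnr1 : ¬(n = 1 ∧ r = 1) := by rintro ⟨h1, h2⟩; rw [h1, h2] at hmax; simp at hmax
  have hsφθ : Real.sin (φ - θ) = Real.sin (θ + ψ) := by
    rw [hφeq, show π - ψ - θ = π - (θ + ψ) by ring, Real.sin_pi_sub]
  have hsφ : Real.sin φ = Real.sin ψ := by rw [hφeq, Real.sin_pi_sub]
  have hθψπ : θ + ψ < π := by
    rcases (by omega : 2 ≤ n ∨ 2 ≤ r) with h | h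
    · have h2 : (2:ℝ) ≤ (n:ℝ) := by exact_mod_cast h
      nlinarith
    · have h2 : (2:ℝ) ≤ (r:ℝ) := by exact_mod_cast h
      nlinarith
  have hsθψ : 0 < Real.sin (θ + ψ) := Real.sin_pos_of_pos_of_lt_pi (by linarith) hθψπ
  have ha : 0 < a := by rw [hadef, hsφθ]; exact div_pos hsθψ hsθ
  have hb : 0 < b := by rw [hbdef, hsφ]; exact div_pos hsψ hsθ
  have haS : a * Real.sin θ = Real.sin (θ + ψ) := by
    rw [hadef, hsφθ]; field_simp
  have hbS : b * Real.sin θ = Real.sin ψ := by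
    rw [hbdef, hsφ]; field_simp
  -- the two key inequalities
  have hI : ∀ σ : ℝ, 0 < σ → σ ≤ 1 → b*σ^n < a + σ^r := by
    intro σ h0 h1
    have hk := key_ineq n r hn hr hnr1 θ ψ hθ0 hψ0 hsum σ h0 h1
    have h2 : Real.sin θ * (b*σ^n) < Real.sin θ * (a + σ^r) := by
      calc Real.sin θ * (b*σ^n) = Real.sin ψ * σ^n := by rw [← hbS]; ring
        _ < Real.sin (θ+ψ) + Real.sin θ * σ^r := hk
        _ = Real.sin θ * (a + σ^r) := by rw [← haS]; ring
    exact lt_of_mul_lt_mul_left h2 hsθ.le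
  have hII : ∀ σ : ℝ, 0 < σ → σ ≤ 1 → σ^r < a + b*σ^n := by
    intro σ h0 h1
    have hk := key_ineq r n hr hn (by tauto) ψ θ hψ0 hθ0 (by linarith) σ h0 h1
    rw [show ψ + θ = θ + ψ by ring] at hk
    have h2 : Real.sin θ * (σ^r) < Real.sin θ * (a + b*σ^n) := by
      calc Real.sin θ * σ^r < Real.sin (θ+ψ) + Real.sin ψ * σ^n := hk
        _ = Real.sin θ * (a + b*σ^n) := by rw [← haS, ← hbS]; ring
    exact lt_of_mul_lt_mul_left h2 hsθ.le
  -- trig identities for the endpoint values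
  have hid1 : (a^2 + 1 - b^2)/(2*a) = Real.cos ψ := by
    have hiden : Real.sin θ^2 + Real.sin (θ+ψ)^2 - Real.sin ψ^2
        = 2*Real.sin (θ+ψ)*Real.cos ψ*Real.sin θ := by
      rw [Real.sin_add]
      linear_combination (Real.sin ψ^2)*(Real.sin_sq_add_cos_sq θ)
        - (Real.sin θ^2)*(Real.sin_sq_add_cos_sq ψ)
    rw [div_eq_iff (by positivity : (2:ℝ)*a ≠ 0)]
    apply mul_left_cancel₀ (pow_ne_zero 2 hsθ.ne')
    rw [← haS, ← hbS] at hiden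
    linear_combination hiden
  have hid2 : (a^2 + b^2 - 1)/(2*a*b) = Real.cos θ := by
    have hiden : Real.sin (θ+ψ)^2 + Real.sin ψ^2 - Real.sin θ^2
        = 2*Real.sin (θ+ψ)*Real.sin ψ*Real.cos θ := by
      rw [Real.sin_add]
      linear_combination (Real.sin θ^2)*(Real.sin_sq_add_cos_sq ψ)
        - (Real.sin ψ^2)*(Real.sin_sq_add_cos_sq θ)
    rw [div_eq_iff (by positivity : (2:ℝ)*a*b ≠ 0)]
    apply mul_left_cancel₀ (pow_ne_zero 2 hsθ.ne')
    rw [← haS, ← hbS] at hiden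
    linear_combination hiden
  -- ============ part 4 ============
  have hpart4 : ∀ ζ : ℂ, Q ζ = 0 → ‖ζ‖ = 1 →
      ζ = Complex.exp (θ * Complex.I) ∨ ζ = Complex.exp (-θ * Complex.I) := by
    intro ζ hQζ habs1
    have hw : ((a:ℝ):ℂ) - ζ*((b:ℝ):ℂ) = (↑a - ζ*↑b) := rfl
    have hweq : ((a:ℂ) - ζ*(b:ℂ))^n = -ζ^r := by
      have h := hQ ζ
      rw [hQζ] at h
      exact eq_neg_of_add_eq_zero_left h.symm
    have habsw : ‖(a:ℂ) - ζ*(b:ℂ)‖ = 1 := by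
      have h := congrArg (‖·‖) hweq
      rw [norm_pow, norm_neg, norm_pow, habs1, one_pow] at h
      exact pow_left_inj' (norm_nonneg _) zero_le_one (n := n) (by omega)
        (by rw [h, one_pow])
    have hnsq : Complex.normSq ((a:ℂ) - ζ*(b:ℂ)) = 1 := by
      rw [← Complex.sq_norm, habsw]; norm_num
    have hnsζ : ζ.re*ζ.re + ζ.im*ζ.im = 1 := by
      have : Complex.normSq ζ = 1 := by rw [← Complex.sq_norm, habs1]; norm_num
      rw [Complex.normSq_apply] at this; exact this
    have hexpand : Complex.normSq ((a:ℂ) - ζ*(b:ℂ))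
        = a^2 - 2*a*b*ζ.re + b^2*(ζ.re*ζ.re + ζ.im*ζ.im) := by
      simp [Complex.normSq_apply, Complex.sub_re, Complex.sub_im, Complex.mul_re,
        Complex.mul_im, Complex.ofReal_re, Complex.ofReal_im]
      ring
    rw [hexpand, hnsζ] at hnsq
    have hre : ζ.re = Real.cos θ := by
      have hd : (a^2 + b^2 - 1) = Real.cos θ * (2*a*b) := by
        rw [← hid2]; field_simp
      apply mul_left_cancel₀ (by positivity : (2:ℝ)*a*b ≠ 0)
      linarith [hd]
    have hab2 : ζ.re^2 + ζ.im^2 = 1 := by rw [pow_two, pow_two]; exact hnsζ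
    have him2 : ζ.im^2 = Real.sin θ^2 := by
      rw [hre] at hab2
      linarith [Real.sin_sq_add_cos_sq θ]
    have hfac : (ζ.im - Real.sin θ)*(ζ.im + Real.sin θ) = 0 := by linear_combination him2
    rcases mul_eq_zero.mp hfac with hcase | hcase
    · left
      apply Complex.ext
      · rw [hre, Complex.exp_ofReal_mul_I_re]
      · rw [Complex.exp_ofReal_mul_I_im]; linarith
    · right
      apply Complex.ext
      · rw [show -(θ:ℂ)*Complex.I = ((-θ : ℝ):ℂ)*Complex.I by push_cast; ring,
          Complex.exp_ofReal_mul_I_re, Real.cos_neg, hre]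
      · rw [show -(θ:ℂ)*Complex.I = ((-θ : ℝ):ℂ)*Complex.I by push_cast; ring,
          Complex.exp_ofReal_mul_I_im, Real.sin_neg]
        linarith
  -- ============ part 5 ============
  refine ⟨hQpos, hQneg, ?_, hpart4, ?_⟩
  · intro h
    have h1 := congrArg Complex.im h
    rw [show -(θ:ℂ)*Complex.I = ((-θ : ℝ):ℂ)*Complex.I by push_cast; ring] at h1
    rw [Complex.exp_ofReal_mul_I_im, Complex.exp_ofReal_mul_I_im, Real.sin_neg] at h1
    linarith
  intro ζ hQζ hne1 hne2
  by_contra hgt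
  push_neg at hgt
  rcases lt_or_eq_of_le hgt with hlt | heq
  swap
  · rcases hpart4 ζ hQζ heq with h | h
    · exact hne1 h
    · exact hne2 h
  have hweq : ((a:ℂ) - ζ*(b:ℂ))^n = -ζ^r := by
    have h := hQ ζ
    rw [hQζ] at h
    exact eq_neg_of_add_eq_zero_left h.symm
  -- main interior lemma
  have hmain : ∀ ξ : ℂ, ((a:ℂ) - ξ*(b:ℂ))^n = -ξ^r → ‖ξ‖ < 1 → 0 < ξ.im → False := by
    intro ξ hwξ habsξ himξ
    have hξ0 : ξ ≠ 0 := by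
      intro h; rw [h] at himξ; simp at himξ
    have hρ0 : 0 < ‖ξ‖ := norm_pos_iff.mpr hξ0
    obtain ⟨σ, hσ0, hσ1, hσn⟩ := nth_root_aux n (by omega) hρ0 habsξ
    set w : ℂ := (a:ℂ) - ξ*(b:ℂ) with hwdef
    have hwim : w.im = -(b*ξ.im) := by
      rw [hwdef]
      simp [Complex.sub_im, Complex.mul_im, Complex.ofReal_re, Complex.ofReal_im]
      ring
    have hwim0 : w.im < 0 := by
      rw [hwim]; have := mul_pos hb himξ; linarith
    have hw0 : w ≠ 0 := by
      intro h; rw [h] at hwim0; simp at hwim0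
    have habsw : ‖w‖ = σ^r := by
      have h := congrArg (‖·‖) hwξ
      rw [norm_pow, norm_neg, norm_pow] at h
      have h2 : ‖ξ‖ ^ r = (σ^r)^n := by rw [← hσn, pow_right_comm]
      exact pow_left_inj' (norm_nonneg w) (by positivity) (n := n) (by omega)
        (by rw [h, h2])
    -- angles
    have hsinB : 0 < Real.sin ξ.arg := by
      rw [Complex.sin_arg]; exact div_pos himξ hρ0
    have hB1a : 0 < ξ.arg := by
      by_contra h
      push_neg at h
      have := Real.sin_nonpos_of_nonpos_of_neg_pi_le h (Complex.neg_pi_lt_arg ξ).le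
      linarith
    have hB1b : ξ.arg < π := by
      rcases lt_or_eq_of_le (Complex.arg_le_pi ξ) with h | h
      · exact h
      · rw [h] at hsinB; simp at hsinB
    have hsinA : Real.sin w.arg < 0 := by
      rw [Complex.sin_arg]
      exact div_neg_of_neg_of_pos hwim0 (norm_pos_iff.mpr hw0)
    have hA1a : 0 < -w.arg := by
      by_contra h
      push_neg at h
      have h2 : 0 ≤ w.arg := by linarith
      have := Real.sin_nonneg_of_nonneg_of_le_pi h2 (Complex.arg_le_pi w)
      linarith
    have hA1b : -w.arg < π := by
      have := Complex.neg_pi_lt_arg w; linarith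
    -- cosine values
    have hcosB : Real.cos ξ.arg = ξ.re / ‖ξ‖ := Complex.cos_arg hξ0
    have hcosA : Real.cos (-w.arg) = w.re / (σ^r) := by
      rw [Real.cos_neg, Complex.cos_arg hw0, habsw]
    have hwre : w.re = a - ξ.re*b := by
      rw [hwdef]
      simp [Complex.sub_re, Complex.mul_re, Complex.ofReal_re, Complex.ofReal_im]
    have hnsw : w.re^2 + w.im^2 = (σ^r)^2 := by
      have h1 : Complex.normSq w = (σ^r)^2 := by rw [← Complex.sq_norm, habsw]
      rw [Complex.normSq_apply] at h1
      rw [pow_two, pow_two]; exact h1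
    have hnsξ : ξ.re^2 + ξ.im^2 = (σ^n)^2 := by
      have h1 : Complex.normSq ξ = (σ^n)^2 := by rw [← Complex.sq_norm, hσn]
      rw [Complex.normSq_apply] at h1
      rw [pow_two, pow_two]; exact h1
    have hξre : 2*a*b*ξ.re = a^2 + (b*σ^n)^2 - (σ^r)^2 := by
      have e : w.re^2 + w.im^2 = a^2 - 2*a*b*ξ.re + b^2*(ξ.re^2 + ξ.im^2) := by
        rw [hwre, hwim]; ring
      rw [e, hnsξ] at hnsw
      linear_combination -hnsw
    have hσn0 : (0:ℝ) < σ^n := by positivity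
    have hσr0 : (0:ℝ) < σ^r := by positivity
    have hcosBv : Real.cos ξ.arg = (a^2 + (b*σ^n)^2 - (σ^r)^2)/(2*a*b*σ^n) := by
      rw [hcosB, ← hσn, div_eq_div_iff hσn0.ne' (by positivity : (2:ℝ)*a*b*σ^n ≠ 0)]
      linear_combination (σ^n) * hξre
    have hcosAv : Real.cos (-w.arg) = (a^2 + (σ^r)^2 - (b*σ^n)^2)/(2*a*σ^r) := by
      rw [hcosA, hwre, div_eq_div_iff hσr0.ne' (by positivity : (2:ℝ)*a*σ^r ≠ 0)]
      linear_combination -(σ^r) * hξre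
    have hACA : Real.arccos ((a^2 + (σ^r)^2 - (b*σ^n)^2)/(2*a*σ^r)) = -w.arg := by
      rw [← hcosAv, Real.arccos_cos hA1a.le hA1b.le]
    have hACB : Real.arccos ((a^2 + (b*σ^n)^2 - (σ^r)^2)/(2*a*b*σ^n)) = ξ.arg := by
      rw [← hcosBv, Real.arccos_cos hB1a.le hB1b.le]
    -- strict triangle inequality at σ
    have hf1 : a < b*σ^n + σ^r := by
      have hc1 : Real.cos (-w.arg) < 1 := by
        have h := Real.strictAntiOn_cos (Set.mem_Icc.mpr ⟨le_rfl, Real.pi_pos.le⟩)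
          (Set.mem_Icc.mpr ⟨hA1a.le, hA1b.le⟩) hA1a
        rw [Real.cos_zero] at h; exact h
      rw [hcosAv, div_lt_one (by positivity)] at hc1
      by_contra h
      push_neg at h
      have h1 : (0:ℝ) ≤ b*σ^n := by positivity
      have h2 : b*σ^n ≤ a - σ^r := by linarith
      have h3 : (b*σ^n)^2 ≤ (a - σ^r)^2 := pow_le_pow_left₀ h1 h2 2
      have e : (a - σ^r)^2 = a^2 - 2*a*σ^r + (σ^r)^2 := by ring
      rw [e] at h3
      linarith
    -- monotonicity
    have hGm := G_mono n r hn hr a b ha hb hI hII σ hσ0 hσ1 hf1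
    simp only [one_pow, mul_one] at hGm
    rw [hACA, hACB] at hGm
    rw [hid1, hid2, Real.arccos_cos hψ0.le hψπ.le, Real.arccos_cos hθ0.le hθπ.le] at hGm
    have hGπ : (n:ℝ)*(-w.arg) + r*ξ.arg < π := by
      calc (n:ℝ)*(-w.arg) + r*ξ.arg < (n:ℝ)*ψ + r*θ := hGm
        _ = π := hsum
    have hGpos : 0 < (n:ℝ)*(-w.arg) + r*ξ.arg := by
      have := mul_pos (by positivity : (0:ℝ) < (n:ℝ)) hA1a
      have := mul_pos (by positivity : (0:ℝ) < (r:ℝ)) hB1a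
      linarith
    -- phase equation
    have hwpol : ((σ^r : ℝ):ℂ) * Complex.exp ((w.arg : ℝ)*Complex.I) = w := by
      rw [← habsw]; exact Complex.norm_mul_exp_arg_mul_I w
    have hξpol : ((‖ξ‖ : ℝ):ℂ) * Complex.exp ((ξ.arg : ℝ)*Complex.I) = ξ :=
      Complex.norm_mul_exp_arg_mul_I ξ
    have l1 : w^n = ((σ^r : ℝ):ℂ)^n * Complex.exp ((((n:ℝ)*w.arg : ℝ):ℂ)*Complex.I) := by
      conv_lhs => rw [← hwpol]
      rw [mul_pow, ← Complex.exp_nat_mul]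
      congr 1
      push_cast
      ring
    have l2 : ξ^r = ((‖ξ‖ : ℝ):ℂ)^r * Complex.exp ((((r:ℝ)*ξ.arg : ℝ):ℂ)*Complex.I) := by
      conv_lhs => rw [← hξpol]
      rw [mul_pow, ← Complex.exp_nat_mul]
      congr 1
      push_cast
      ring
    have hmod : ((σ^r : ℝ):ℂ)^n = ((‖ξ‖ : ℝ):ℂ)^r := by
      have h : (σ^r)^n = (‖ξ‖)^r := by rw [← hσn, pow_right_comm]
      exact_mod_cast congrArg (fun x : ℝ => (x:ℂ)) h
    have hc0 : ((‖ξ‖ : ℝ):ℂ)^r ≠ 0 := by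
      apply pow_ne_zero
      exact_mod_cast hρ0.ne'
    have hEE : Complex.exp ((((n:ℝ)*w.arg : ℝ):ℂ)*Complex.I)
        = -Complex.exp ((((r:ℝ)*ξ.arg : ℝ):ℂ)*Complex.I) := by
      have h1 : ((σ^r : ℝ):ℂ)^n * Complex.exp ((((n:ℝ)*w.arg : ℝ):ℂ)*Complex.I)
          = -(((‖ξ‖ : ℝ):ℂ)^r * Complex.exp ((((r:ℝ)*ξ.arg : ℝ):ℂ)*Complex.I)) := by
        rw [← l1, ← l2]; exact hwξ
      rw [hmod] at h1
      exact mul_left_cancel₀ hc0 (h1.trans (by ring))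
    have h3 : Complex.exp ((((n:ℝ)*w.arg : ℝ):ℂ)*Complex.I)
        * Complex.exp (-((((r:ℝ)*ξ.arg : ℝ):ℂ)*Complex.I)) = -1 := by
      rw [hEE, Complex.exp_neg, neg_mul, mul_inv_cancel₀ (Complex.exp_ne_zero _)]
    have hE2 : Complex.exp (((-((n:ℝ)*(-w.arg) + r*ξ.arg) : ℝ):ℂ)*Complex.I) = -1 := by
      calc Complex.exp (((-((n:ℝ)*(-w.arg) + r*ξ.arg) : ℝ):ℂ)*Complex.I)
          = Complex.exp ((((n:ℝ)*w.arg : ℝ):ℂ)*Complex.I + -((((r:ℝ)*ξ.arg : ℝ):ℂ)*Complex.I)) := by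
            congr 1; push_cast; ring
        _ = Complex.exp ((((n:ℝ)*w.arg : ℝ):ℂ)*Complex.I)
            * Complex.exp (-((((r:ℝ)*ξ.arg : ℝ):ℂ)*Complex.I)) := Complex.exp_add _ _
        _ = -1 := h3
    have hcos : Real.cos (-((n:ℝ)*(-w.arg) + r*ξ.arg)) = -1 := by
      have h := congrArg Complex.re hE2
      rwa [Complex.exp_ofReal_mul_I_re, Complex.neg_re, Complex.one_re] at h
    rw [Real.cos_neg] at hcos
    have hlast : Real.cos π < Real.cos ((n:ℝ)*(-w.arg) + r*ξ.arg) :=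
      Real.strictAntiOn_cos (Set.mem_Icc.mpr ⟨hGpos.le, hGπ.le⟩)
        (Set.mem_Icc.mpr ⟨Real.pi_pos.le, le_rfl⟩) hGπ
    rw [Real.cos_pi] at hlast
    linarith
  rcases lt_trichotomy ζ.im 0 with him | him | him
  · apply hmain (starRingEnd ℂ ζ)
    · have h := congrArg (starRingEnd ℂ) hweq
      simpa [map_pow, map_sub, map_mul, map_neg, Complex.conj_ofReal] using h
    · rw [Complex.norm_conj]; exact hlt
    · rw [Complex.conj_im]; linarith
  · -- real case
    have hζre : ζ = ((ζ.re : ℝ) : ℂ) := Complex.ext rfl (by simp [him])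
    set t : ℝ := ζ.re with htdef
    rw [hζre] at hweq
    have hreal : (a - t*b)^n = -(t^r) := by
      have h : (((a - t*b : ℝ)):ℂ)^n = (((-(t^r) : ℝ)):ℂ) := by push_cast; exact hweq
      exact_mod_cast h
    have habst : |t| < 1 := by
      rw [hζre, Complex.norm_real, Real.norm_eq_abs] at hlt; exact hlt
    have ht0 : t ≠ 0 := by
      intro h
      rw [h] at hreal
      have e0 : (a - 0*b)^n = a^n := by norm_num
      rw [e0, zero_pow (by omega : r ≠ 0), neg_zero] at hreal
      exact (pow_pos ha n).ne' hreal
    rcases ht0.lt_or_gt with htneg | htpos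
    · -- t < 0
      have hm0 : 0 < -t := by linarith
      have hm1 : -t < 1 := by rw [abs_of_neg htneg] at habst; exact habst
      rcases Nat.even_or_odd r with hrev | hrod
      · have h1 : 0 < a - t*b := by
          have h := mul_pos (by linarith : (0:ℝ) < -t) hb
          linarith [h, ha]
        have h2 : 0 < t^r := hrev.pow_pos ht0
        have h3 : 0 < (a - t*b)^n := pow_pos h1 n
        linarith [hreal, h2, h3]
      · have h2 : t^r = -((-t)^r) := by
          rw [hrod.neg_pow]; ring
        have h3 : (a + (-t)*b)^n = (-t)^r := by
          rw [show a + (-t)*b = a - t*b by ring, hreal, h2]; ring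
        obtain ⟨σ, hσ0, hσ1, hσn⟩ := nth_root_aux n (by omega) hm0 hm1
        have h4 : a + (-t)*b = σ^r := by
          apply pow_left_inj' (by linarith [mul_pos hm0 hb, ha] : (0:ℝ) ≤ a + (-t)*b)
            (by positivity) (by omega : n ≠ 0)
          rw [h3, ← hσn, pow_right_comm]
        have h5 := hII σ hσ0 hσ1.le
        rw [hσn] at h5
        linarith [h4, h5]
    · -- t > 0
      have ht1 : t < 1 := by rw [abs_of_pos htpos] at habst; exact habst
      rcases Nat.even_or_odd n with hnev | hnod
      · have h1 : 0 ≤ (a - t*b)^n := hnev.pow_nonneg _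
        have h2 : 0 < t^r := pow_pos htpos r
        linarith [hreal]
      · have h4 : (t*b - a)^n = t^r := by
          have h5 : (-(t*b - a))^n = -(t*b - a)^n := hnod.neg_pow _
          rw [show a - t*b = -(t*b - a) by ring, h5] at hreal
          linarith [hreal]
        have h5 : 0 < t*b - a := by
          by_contra h
          push_neg at h
          have h6 : (t*b - a)^n ≤ 0 := hnod.pow_nonpos h
          have := pow_pos htpos r
          linarith [h4]
        obtain ⟨σ, hσ0, hσ1, hσn⟩ := nth_root_aux n (by omega) htpos ht1
        have h7 : t*b - a = σ^r := by
          apply pow_left_inj' h5.le (by positivity) (by omega : n ≠ 0)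
          rw [h4, ← hσn, pow_right_comm]
        have h8 := hI σ hσ0 hσ1.le
        rw [hσn] at h8
        linarith [h7, h8]
  · exact hmain ζ hweq hlt him
end

section
/- Let r ≥ 2 be an integer and let θ ∈ (0, π/r). Let ω be any complex n-th root of −1 for some integer n ≥ 2. If ζ is a zero of R(ζ) = sin((n-1)π/n + rθ/n − θ) − ζ^n sin((n-1)π/n + rθ/n) − ω ζ^r sin θ with |ζ| = 1, then ζ^n = e^{iθ} or ζ^n = e^{-iθ}. -/
open Real Complex

theorem stmt_12 (n r : ℕ) (hn : 2 ≤ n) (hr : 2 ≤ r)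
    (θ : ℝ) (hθ : θ ∈ Set.Ioo 0 (π / r)) (φ : ℝ)
    (hφ : φ = (((n : ℝ) - 1) * π + r * θ) / n)
    (ω : ℂ) (hω : ω ^ n = -1)
    (ζ : ℂ) (hζ : ‖ζ‖ = 1)
    (hR : ((Real.sin (φ - θ) : ℝ) : ℂ) - ζ ^ n * ((Real.sin φ : ℝ) : ℂ)
        - ω * ζ ^ r * ((Real.sin θ : ℝ) : ℂ) = 0) :
    ζ ^ n = Complex.exp (θ * Complex.I) ∨ ζ ^ n = Complex.exp (-θ * Complex.I) := by
  obtain ⟨hθ0, hθr⟩ := hθ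
  have hπ : (0:ℝ) < π := Real.pi_pos
  have hn2 : (2:ℝ) ≤ (n:ℝ) := by exact_mod_cast hn
  have hr2 : (2:ℝ) ≤ (r:ℝ) := by exact_mod_cast hr
  have hnpos : (0:ℝ) < (n:ℝ) := by linarith
  have hrpos : (0:ℝ) < (r:ℝ) := by linarith
  have hrθ : (r:ℝ) * θ < π := by
    have := (lt_div_iff₀ hrpos).mp hθr
    linarith
  have hφ0 : 0 < φ := by
    rw [hφ]
    have : 0 < ((n:ℝ) - 1) * π + r * θ := by nlinarith
    positivity
  have hφπ : φ < π := by
    rw [hφ, div_lt_iff₀ hnpos]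
    nlinarith
  have hφθ : θ < φ := by
    rw [hφ, lt_div_iff₀ hnpos]
    nlinarith [mul_lt_mul_of_pos_left hrθ (show (0:ℝ) < (n:ℝ) - 1 by linarith),
      mul_nonneg (mul_nonneg hθ0.le hnpos.le) (show (0:ℝ) ≤ (r:ℝ) - 1 by linarith)]
  have ha : 0 < Real.sin φ := Real.sin_pos_of_pos_of_lt_pi hφ0 hφπ
  have hb : 0 < Real.sin θ := Real.sin_pos_of_pos_of_lt_pi hθ0 (by nlinarith)
  have hs : 0 < Real.sin (φ - θ) := Real.sin_pos_of_pos_of_lt_pi (by linarith) (by linarith)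
  set a := Real.sin φ with ha_def
  set b := Real.sin θ with hb_def
  set s := Real.sin (φ - θ) with hs_def
  -- |ω| = 1
  have habsω : ‖ω‖ = 1 := by
    have h1 : ‖ω‖ ^ n = 1 := by
      rw [← norm_pow, hω]; simp
    rcases lt_trichotomy ‖ω‖ 1 with h | h | h
    · have h2 := pow_lt_one₀ (norm_nonneg ω) h (by omega : n ≠ 0)
      rw [h1] at h2; linarith
    · exact h
    · have h2 := one_lt_pow₀ h (by omega : n ≠ 0)
      rw [h1] at h2; linarith
  -- key: |s - a ζ^n| = b
  have key : ‖(s:ℂ) - (a:ℂ) * ζ ^ n‖ = b := by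
    have h2 : (s:ℂ) - (a:ℂ) * ζ ^ n = ω * ζ ^ r * (b:ℂ) := by
      linear_combination hR
    rw [h2, norm_mul, norm_mul, habsω, norm_pow, hζ, one_pow, one_mul, one_mul,
      Complex.norm_real, Real.norm_eq_abs, abs_of_pos hb]
  set x := (ζ ^ n).re with hx_def
  set y := (ζ ^ n).im with hy_def
  have hxy : x ^ 2 + y ^ 2 = 1 := by
    have h1 : ‖ζ ^ n‖ = 1 := by rw [norm_pow, hζ, one_pow]
    have h2 := Complex.sq_norm (ζ ^ n)
    rw [h1, Complex.normSq_apply] at h2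
    nlinarith
  have hkey2 : (s - a * x) ^ 2 + (a * y) ^ 2 = b ^ 2 := by
    have h1 := congrArg (fun t => t ^ 2) key
    rw [Complex.sq_norm, Complex.normSq_apply] at h1
    simp only [Complex.sub_re, Complex.sub_im, Complex.mul_re, Complex.mul_im,
      Complex.ofReal_re, Complex.ofReal_im] at h1
    linear_combination h1
  have htrig : s ^ 2 - 2 * a * s * Real.cos θ + a ^ 2 - b ^ 2 = 0 := by
    have h1 : s = a * Real.cos θ - Real.cos φ * b := Real.sin_sub φ θ
    linear_combination (s - a * Real.cos θ - Real.cos φ * b) * h1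
      + b ^ 2 * Real.sin_sq_add_cos_sq φ - a ^ 2 * Real.sin_sq_add_cos_sq θ
  have e1 : 2 * a * s * x = s ^ 2 + a ^ 2 - b ^ 2 := by
    linear_combination (-1 : ℝ) * hkey2 + a ^ 2 * hxy
  have hx : x = Real.cos θ := by
    have h2 : 2 * a * s * x = 2 * a * s * Real.cos θ := by linarith
    have h3 : (2 * a * s) ≠ 0 := by positivity
    exact mul_left_cancel₀ h3 h2
  have hy2 : (y - b) * (y + b) = 0 := by
    rw [hx] at hxy
    linear_combination hxy - Real.sin_sq_add_cos_sq θ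
  rcases mul_eq_zero.mp hy2 with h | h
  · left
    have hy : y = b := by linarith
    apply Complex.ext
    · simp [Complex.exp_re, ← hx_def, hx]
    · simp [Complex.exp_im, ← hy_def, hy, hb_def]
  · right
    have hy : y = -b := by linarith
    apply Complex.ext
    · simp [Complex.exp_re, ← hx_def, hx]
    · simp [Complex.exp_im, ← hy_def, hy, hb_def]
end

section
/- Let n = r ≥ 2, θ ∈ (0, π/n), and φ = ((n-1)π + nθ)/n. The polynomial Q(ζ) = (sin(φ-θ)/sin θ − ζ sin φ/sin θ)^n + ζ^n has only simple zeros. -/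
open Real Complex

theorem stmt_14 (n : ℕ) (hn : 2 ≤ n)
    (θ : ℝ) (hθ : θ ∈ Set.Ioo 0 (π / n)) (φ : ℝ)
    (hφ : φ = (((n : ℝ) - 1) * π + n * θ) / n) (Q : ℂ → ℂ)
    (hQ : ∀ ζ, Q ζ = (((Real.sin (φ - θ) / Real.sin θ : ℝ) : ℂ)
        - ζ * ((Real.sin φ / Real.sin θ : ℝ) : ℂ)) ^ n + ζ ^ n) :
    ∀ ζ : ℂ, Q ζ = 0 → deriv Q ζ ≠ 0 := by
  intro ζ hQ0 hd
  set aR : ℝ := Real.sin (φ - θ) / Real.sin θ with haR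
  set bR : ℝ := Real.sin φ / Real.sin θ with hbR
  set a : ℂ := (aR : ℂ) with ha
  set b : ℂ := (bR : ℂ) with hb
  have hnR : (0:ℝ) < (n:ℝ) := by
    have : (0:ℕ) < n := by omega
    exact_mod_cast this
  have hnR' : (n:ℝ) ≠ 0 := ne_of_gt hnR
  have hsinθ : 0 < Real.sin θ := by
    apply Real.sin_pos_of_pos_of_lt_pi hθ.1
    calc θ < π / n := hθ.2
      _ ≤ π := div_le_self Real.pi_pos.le (by exact_mod_cast Nat.one_le_of_lt hn)
  have hφθ : φ - θ = ((n:ℝ) - 1) * π / n := by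
    rw [hφ]; field_simp; ring
  have h1n : (1:ℝ) ≤ (n:ℝ) - 1 := by
    have : (2:ℝ) ≤ (n:ℝ) := by exact_mod_cast hn
    linarith
  have hsinφθ : 0 < Real.sin (φ - θ) := by
    rw [hφθ]
    apply Real.sin_pos_of_pos_of_lt_pi
    · apply div_pos (mul_pos (by linarith) Real.pi_pos) hnR
    · rw [div_lt_iff₀ hnR]
      nlinarith [Real.pi_pos]
  have haR0 : aR ≠ 0 := ne_of_gt (div_pos hsinφθ hsinθ)
  have ha0 : a ≠ 0 := by
    rw [ha]; exact_mod_cast haR0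
  -- compute the derivative
  have hQfun : Q = fun z : ℂ => (a - z * b) ^ n + z ^ n := funext hQ
  have hder : HasDerivAt Q ((n : ℂ) * (a - ζ * b) ^ (n - 1) * (-b) + (n:ℂ) * ζ ^ (n-1)) ζ := by
    rw [hQfun]
    have h1 : HasDerivAt (fun z : ℂ => a - z * b) (-b) ζ := by
      simpa using ((hasDerivAt_id ζ).mul_const b).const_sub a
    have h2 := h1.pow n
    have h3 := hasDerivAt_pow n ζ
    have h4 : HasDerivAt (fun z : ℂ => (a - z * b) ^ n + z ^ n) _ ζ := h2.add h3
    simpa [mul_comm, mul_assoc, mul_left_comm] using h4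
  have hd' : (n : ℂ) * (a - ζ * b) ^ (n - 1) * (-b) + (n:ℂ) * ζ ^ (n-1) = 0 := by
    rw [← hder.deriv]; exact hd
  have hQ0' : (a - ζ * b) ^ n + ζ ^ n = 0 := by rw [hQ] at hQ0; exact hQ0
  set u : ℂ := a - ζ * b with hu
  have hnC : (n:ℂ) ≠ 0 := by exact_mod_cast (by omega : n ≠ 0)
  have key : ζ ^ (n-1) = b * u ^ (n-1) := by
    have h2 : (n:ℂ) * (ζ ^ (n-1) - b * u ^ (n-1)) = 0 := by linear_combination hd'
    rcases mul_eq_zero.mp h2 with h | h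
    · exact absurd h hnC
    · linear_combination h
  have hζ0 : ζ ≠ 0 := by
    intro h
    have hua : u = a := by rw [hu, h]; ring
    rw [hua, h, zero_pow (by omega : n ≠ 0), add_zero] at hQ0'
    exact ha0 (pow_eq_zero_iff (by omega : n ≠ 0) |>.mp hQ0')
  have hu0 : u ≠ 0 := by
    intro h
    rw [h, zero_pow (by omega : n ≠ 0), zero_add] at hQ0'
    exact hζ0 (pow_eq_zero_iff (by omega : n ≠ 0) |>.mp hQ0')
  -- ζ^n = ζ * ζ^(n-1) = ζ * b * u^(n-1), and ζ^n = -u^n = -u * u^(n-1)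
  have hpow : ζ ^ n = ζ * ζ ^ (n-1) := by
    rw [← pow_succ']
    congr 1
    omega
  have hupow : u ^ n = u * u ^ (n-1) := by
    rw [← pow_succ']
    congr 1
    omega
  have : a * u ^ (n-1) = 0 := by
    have h1 : ζ * b * u ^ (n-1) + u * u ^ (n-1) = 0 := by
      rw [← hupow]
      calc ζ * b * u ^ (n-1) + u ^ n = ζ * ζ ^ (n-1) + u ^ n := by rw [key]; ring
        _ = ζ ^ n + u ^ n := by rw [← hpow]
        _ = 0 := by linear_combination hQ0'
    have : (ζ * b + u) * u ^ (n-1) = 0 := by linear_combination h1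
    have ha' : ζ * b + u = a := by rw [hu]; ring
    rwa [ha'] at this
  rcases mul_eq_zero.mp this with h | h
  · exact ha0 h
  · exact hu0 (pow_eq_zero_iff (by omega : n - 1 ≠ 0) |>.mp h)
end

section
/- Let n, r ∈ ℕ with n ≠ r and max{n,r} > 1, θ ∈ (0, π/r), φ = ((n-1)π + rθ)/n, and Q(ζ) = (sin(φ-θ)/sin θ − ζ sin φ/sin θ)^n + ζ^r. If ζ* is a multiple zero of Q (i.e., Q(ζ*) = Q'(ζ*) = 0), then ζ* = −(r/(n−r)) · sin(φ−θ)/sin φ. -/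
open Real Complex

theorem stmt_15 (n r : ℕ) (hn : 0 < n) (hr : 0 < r) (hne : n ≠ r)
    (hmax : 1 < max n r)
    (θ : ℝ) (hθ : θ ∈ Set.Ioo 0 (π / r)) (φ : ℝ)
    (hφ : φ = (((n : ℝ) - 1) * π + r * θ) / n) (Q : ℂ → ℂ)
    (hQ : ∀ ζ, Q ζ = (((Real.sin (φ - θ) / Real.sin θ : ℝ) : ℂ)
        - ζ * ((Real.sin φ / Real.sin θ : ℝ) : ℂ)) ^ n + ζ ^ r)
    (ζstar : ℂ) (h0 : Q ζstar = 0) (h1 : deriv Q ζstar = 0) :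
    ζstar = -((r : ℂ) / ((n : ℂ) - (r : ℂ))) *
      ((Real.sin (φ - θ) / Real.sin φ : ℝ) : ℂ) := by
  obtain ⟨hθ0, hθπ⟩ := hθ
  have hrR : (1:ℝ) ≤ r := by exact_mod_cast hr
  have hnR : (1:ℝ) ≤ n := by exact_mod_cast hn
  have hπ := Real.pi_pos
  have hrθ : (r:ℝ) * θ < π := by
    rw [lt_div_iff₀ (by linarith)] at hθπ; linarith [hθπ]
  have hθπ' : θ < π := by nlinarith
  have hnpos : (0:ℝ) < n := by linarith
  have hrpos : (0:ℝ) < r := by linarith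
  have hφn : (n:ℝ) * φ = ((n:ℝ) - 1) * π + r * θ := by
    rw [hφ]; field_simp
  -- 0 < φ < π
  have hφ0 : 0 < φ := by
    nlinarith [hφn, mul_pos hrpos hθ0, mul_nonneg (by linarith : (0:ℝ) ≤ (n:ℝ) - 1) hπ.le,
      mul_pos hnpos hπ]
  have hφπ : φ < π := by
    nlinarith [hφn, hrθ]
  -- 0 < φ - θ
  have hd0 : 0 < φ - θ := by
    rcases lt_or_gt_of_ne hne with h | h
    · -- n < r
      have hnr : (n:ℝ) + 1 ≤ r := by exact_mod_cast h
      have h1 : (0:ℝ) ≤ ((r:ℝ) - n - 1) * θ := mul_nonneg (by linarith) hθ0.le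
      have h2 : (0:ℝ) ≤ ((n:ℝ) - 1) * π := mul_nonneg (by linarith) hπ.le
      nlinarith [hφn, h1, h2]
    · -- r < n
      have hrn : (r:ℝ) + 1 ≤ n := by exact_mod_cast h
      have h1 : (0:ℝ) < ((n:ℝ) - r) * (π - r * θ) :=
        mul_pos (by linarith) (by linarith)
      have h2 : (0:ℝ) ≤ π * n * ((r:ℝ) - 1) :=
        mul_nonneg (mul_nonneg hπ.le hnpos.le) (by linarith)
      have h3 : (r:ℝ) * ((n:ℝ) * φ - n * θ) = ((n:ℝ) - r) * (π - r * θ) + π * n * ((r:ℝ) - 1) := by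
        rw [hφn]; ring
      have h4 : 0 < (r:ℝ) * ((n:ℝ) * (φ - θ)) := by nlinarith [h1, h2, h3]
      nlinarith [h4, mul_pos hrpos hnpos]
  have hdπ : φ - θ < π := by linarith
  have hsθ : 0 < Real.sin θ := Real.sin_pos_of_pos_of_lt_pi hθ0 hθπ'
  have hsφ : 0 < Real.sin φ := Real.sin_pos_of_pos_of_lt_pi hφ0 hφπ
  have hsd : 0 < Real.sin (φ - θ) := Real.sin_pos_of_pos_of_lt_pi hd0 hdπ
  -- complex setup
  set a : ℂ := ((Real.sin (φ - θ) / Real.sin θ : ℝ) : ℂ) with ha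
  set b : ℂ := ((Real.sin φ / Real.sin θ : ℝ) : ℂ) with hb
  have hQfun : Q = fun ζ => (a - ζ * b) ^ n + ζ ^ r := funext hQ
  have hder : HasDerivAt Q ((n : ℂ) * (a - ζstar * b) ^ (n - 1) * (-(1 * b))
      + (r : ℂ) * ζstar ^ (r - 1)) ζstar := by
    rw [hQfun]
    exact ((((hasDerivAt_id ζstar).mul_const b).const_sub a).pow n).add
      (hasDerivAt_pow r ζstar)
  have e2 : (n : ℂ) * (a - ζstar * b) ^ (n - 1) * (-(1 * b))
      + (r : ℂ) * ζstar ^ (r - 1) = 0 := by rw [← hder.deriv]; exact h1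
  have e1 : (a - ζstar * b) ^ n + ζstar ^ r = 0 := by rw [← hQ]; exact h0
  have hu : (a - ζstar * b) ^ (n - 1) * (a - ζstar * b) = (a - ζstar * b) ^ n := by
    rw [← pow_succ]; congr 1; omega
  have hz : ζstar ^ (r - 1) * ζstar = ζstar ^ r := by
    rw [← pow_succ]; congr 1; omega
  have key : ζstar ^ (r - 1) * (((n:ℂ) - (r:ℂ)) * b * ζstar + (r:ℂ) * a) = 0 := by
    linear_combination (a - ζstar * b) * e2 + (n:ℂ) * b * hu + (n:ℂ) * b * e1 +
      (n:ℂ) * b * hz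
  have haR : a = ((Real.sin (φ - θ) : ℝ) : ℂ) / ((Real.sin θ : ℝ) : ℂ) := by
    rw [ha]; push_cast; ring
  have hbR : b = ((Real.sin φ : ℝ) : ℂ) / ((Real.sin θ : ℝ) : ℂ) := by
    rw [hb]; push_cast; ring
  have hsθ' : ((Real.sin θ : ℝ) : ℂ) ≠ 0 := by
    exact_mod_cast (ne_of_gt hsθ)
  have hsφ' : ((Real.sin φ : ℝ) : ℂ) ≠ 0 := by
    exact_mod_cast (ne_of_gt hsφ)
  have hsd' : ((Real.sin (φ - θ) : ℝ) : ℂ) ≠ 0 := by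
    exact_mod_cast (ne_of_gt hsd)
  have ha0 : a ≠ 0 := by
    rw [haR]; exact div_ne_zero hsd' hsθ'
  have hb0 : b ≠ 0 := by
    rw [hbR]; exact div_ne_zero hsφ' hsθ'
  have hζ0 : ζstar ≠ 0 := by
    intro h
    rw [h] at e1
    simp [zero_pow hr.ne'] at e1
    exact ha0 e1.1
  have hnr : (n : ℂ) - (r : ℂ) ≠ 0 := by
    rw [sub_ne_zero]
    exact_mod_cast hne
  have hr0 : ((n:ℂ) - (r:ℂ)) * b * ζstar + (r:ℂ) * a = 0 := by
    rcases mul_eq_zero.mp key with h | h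
    · exact absurd h (pow_ne_zero _ hζ0)
    · exact h
  have hcast : ((Real.sin (φ - θ) / Real.sin φ : ℝ) : ℂ)
      = ((Real.sin (φ - θ) : ℝ) : ℂ) / ((Real.sin φ : ℝ) : ℂ) := by
    push_cast; ring
  have ha' : a * ((Real.sin θ : ℝ) : ℂ) = ((Real.sin (φ - θ) : ℝ) : ℂ) := by
    rw [haR, div_mul_cancel₀ _ hsθ']
  have hb' : b * ((Real.sin θ : ℝ) : ℂ) = ((Real.sin φ : ℝ) : ℂ) := by
    rw [hbR, div_mul_cancel₀ _ hsθ']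
  have hmul : ζstar * (((n:ℂ) - (r:ℂ)) * ((Real.sin φ : ℝ) : ℂ))
      = -((r:ℂ) * ((Real.sin (φ - θ) : ℝ) : ℂ)) := by
    linear_combination ((Real.sin θ : ℝ) : ℂ) * hr0
      - (((n:ℂ) - (r:ℂ)) * ζstar) * hb' - (r:ℂ) * ha'
  have hrw : -((r:ℂ) / ((n:ℂ) - (r:ℂ))) *
      (((Real.sin (φ - θ) : ℝ) : ℂ) / ((Real.sin φ : ℝ) : ℂ))
      = -((r:ℂ) * ((Real.sin (φ - θ) : ℝ) : ℂ)) / (((n:ℂ) - (r:ℂ)) * ((Real.sin φ : ℝ) : ℂ)) := by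
    rw [neg_mul, div_mul_div_comm, neg_div]
  rw [hcast, hrw, eq_div_iff (mul_ne_zero hnr hsφ')]
  exact hmul
end

section
/- Let n, h be positive integers with h < n/20 and n > 85, and for j ≥ 1 set a_j = (−1)^j (hn)^{jn−1}/((nj−1)!). Then |a_{h−1}| + |a_{h+1}| < |a_h| (interpreting a_0 = 0 if h = 1); more precisely, with P₁ = Π_{ℓ=0}^{n−1}(1 − (n−ℓ)/(nh)) and P₂ = Π_{ℓ=1}^{n−1}(1 + ℓ/(nh)), one has P₁ < exp(−(n+1)/(2h)), P₂ > exp((n−1)/(4h)), and P₁ + 1/P₂ < 1. -/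
open Real Finset

lemma asc_prod (m : ℕ) : ∀ k : ℕ, m.ascFactorial k = ∏ i ∈ range k, (m + i)
  | 0 => by simp
  | (k+1) => by rw [Nat.ascFactorial_succ, prod_range_succ, asc_prod m k]; ring

lemma exp_half_lt {x : ℝ} (h0 : 0 < x) (h1 : x < 1) : Real.exp (x/2) < 1 + x := by
  have h2 : (0:ℝ) < 1 + x := by linarith
  have key := Real.one_sub_inv_le_log_of_pos h2
  have heq : 1 - (1+x)⁻¹ = x / (1+x) := by field_simp; ring
  rw [heq] at key
  have hlt : x / 2 < Real.log (1 + x) := by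
    have : x / 2 < x / (1 + x) :=
      div_lt_div_of_pos_left h0 (by linarith) (by linarith)
    linarith
  calc Real.exp (x/2) < Real.exp (Real.log (1+x)) := Real.exp_lt_exp.2 hlt
    _ = 1 + x := Real.exp_log h2

theorem stmt_19 (n h : ℕ) (hn : 85 < n) (hh : 1 ≤ h) (hhn : (h : ℝ) < (n : ℝ) / 20)
    (P₁ P₂ : ℝ)
    (hP₁ : P₁ = ∏ ℓ ∈ Finset.range n, (1 - ((n : ℝ) - ℓ) / ((n : ℝ) * h)))
    (hP₂ : P₂ = ∏ ℓ ∈ Finset.Icc 1 (n - 1), (1 + (ℓ : ℝ) / ((n : ℝ) * h)))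
    (a : ℕ → ℝ)
    (ha : ∀ j, a j = if j = 0 then 0 else
      (-1 : ℝ) ^ j * ((h : ℝ) * n) ^ (j * n - 1) / (Nat.factorial (n * j - 1))) :
    P₁ < Real.exp (-((n : ℝ) + 1) / (2 * h)) ∧
    Real.exp (((n : ℝ) - 1) / (4 * h)) < P₂ ∧
    P₁ + 1 / P₂ < 1 ∧
    |a (h - 1)| + |a (h + 1)| < |a h| := by
  have hn0 : (0:ℝ) < n := by positivity
  have hh0 : (0:ℝ) < h := by exact_mod_cast hh
  have hnh : (0:ℝ) < (n:ℝ) * h := by positivity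
  -- Gauss sum
  have hn85 : (85:ℝ) < n := by exact_mod_cast hn
  have hh1 : (1:ℝ) ≤ h := by exact_mod_cast hh
  have hgauss : (∑ ℓ ∈ range n, (ℓ:ℝ)) = (n:ℝ) * ((n:ℝ) - 1) / 2 := by
    have h2 := Finset.sum_range_id_mul_two n
    have h3 : ((∑ i ∈ range n, i : ℕ):ℝ) * 2 = ((n * (n-1) : ℕ) : ℝ) := by
      exact_mod_cast congrArg (Nat.cast : ℕ → ℝ) h2
    push_cast [Nat.cast_sub (by omega : 1 ≤ n)] at h3
    linarith
  -- Part 1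
  have h1 : P₁ < Real.exp (-((n : ℝ) + 1) / (2 * h)) := by
    rcases eq_or_lt_of_le hh with h1' | h2'
    · -- h = 1 : P₁ = 0
      have hP10 : P₁ = 0 := by
        rw [hP₁]
        apply Finset.prod_eq_zero (Finset.mem_range.2 (by omega : 0 < n))
        rw [← h1']
        push_cast
        field_simp
        simp
      rw [hP10]; exact Real.exp_pos _
    · have hh2 : (2:ℝ) ≤ h := by exact_mod_cast h2'
      have step : P₁ < ∏ ℓ ∈ range n, Real.exp (-(((n:ℝ) - ℓ) / ((n:ℝ) * h))) := by
        rw [hP₁]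
        apply Finset.prod_lt_prod_of_nonempty
        · intro i hi
          have hi' : (i:ℝ) < n := by exact_mod_cast Finset.mem_range.1 hi
          have : ((n:ℝ) - i) / ((n:ℝ) * h) < 1 := by
            rw [div_lt_one hnh]; nlinarith
          linarith
        · intro i hi
          have hi' : (i:ℝ) < n := by exact_mod_cast Finset.mem_range.1 hi
          have hx : (0:ℝ) < ((n:ℝ) - i) / ((n:ℝ) * h) := div_pos (by linarith) hnh
          have := Real.add_one_lt_exp (x := -(((n:ℝ) - i) / ((n:ℝ) * h))) (by linarith)
          linarith
        · exact ⟨0, Finset.mem_range.2 (by omega)⟩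
      rw [← Real.exp_sum] at step
      have hs : ∑ ℓ ∈ range n, (-(((n:ℝ) - ℓ) / ((n:ℝ) * h))) = -((n : ℝ) + 1) / (2 * h) := by
        have : ∑ ℓ ∈ range n, (-(((n:ℝ) - ℓ) / ((n:ℝ) * h)))
            = (∑ ℓ ∈ range n, -((n:ℝ) - ℓ)) / ((n:ℝ) * h) := by
          rw [Finset.sum_div]
          congr 1; ext ℓ; ring
        rw [this, Finset.sum_neg_distrib, Finset.sum_sub_distrib, Finset.sum_const,
          Finset.card_range, hgauss]
        field_simp
        ring
      rw [hs] at step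
      exact step
  -- Part 2 : rewrite P₂ over Ico 1 n
  have hIcc : Finset.Icc 1 (n-1) = Finset.Ico 1 n := by
    rw [← Finset.Ico_add_one_right_eq_Icc]
    congr 1
    omega
  have h2 : Real.exp (((n : ℝ) - 1) / (4 * h)) < P₂ := by
    have step : (∏ ℓ ∈ Ico 1 n, Real.exp ((ℓ:ℝ) / ((n:ℝ) * h) / 2)) < P₂ := by
      rw [hP₂, hIcc]
      apply Finset.prod_lt_prod_of_nonempty
      · intro i _; exact Real.exp_pos _
      · intro i hi
        obtain ⟨hi1, hi2⟩ := Finset.mem_Ico.1 hi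
        have hx0 : (0:ℝ) < (i:ℝ) / ((n:ℝ) * h) := by
          have : (0:ℝ) < (i:ℝ) := by exact_mod_cast hi1
          positivity
        have hx1 : (i:ℝ) / ((n:ℝ) * h) < 1 := by
          rw [div_lt_one hnh]
          have hi' : (i:ℝ) < n := by exact_mod_cast hi2
          nlinarith [hh1, hn0]
        exact exp_half_lt hx0 hx1
      · exact ⟨1, Finset.mem_Ico.2 ⟨le_refl 1, by omega⟩⟩
    rw [← Real.exp_sum] at step
    have hs : ∑ ℓ ∈ Ico 1 n, ((ℓ:ℝ) / ((n:ℝ) * h) / 2) = ((n : ℝ) - 1) / (4 * h) := by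
      have h0 : ∑ ℓ ∈ Ico 1 n, ((ℓ:ℝ) / ((n:ℝ) * h) / 2)
          = (∑ ℓ ∈ Ico 1 n, (ℓ:ℝ)) / ((n:ℝ) * h) / 2 := by
        rw [Finset.sum_div, Finset.sum_div]
      have h1' : ∑ ℓ ∈ Ico 1 n, (ℓ:ℝ) = ∑ ℓ ∈ range n, (ℓ:ℝ) := by
        rw [Finset.range_eq_Ico, Finset.sum_eq_sum_Ico_succ_bot (by omega : 0 < n)]
        simp
      rw [h0, h1', hgauss]
      field_simp
      ring
    rw [hs] at step
    exact step
  -- Part 3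
  have hP2pos : (0:ℝ) < P₂ := lt_trans (Real.exp_pos _) h2
  have h3 : P₁ + 1 / P₂ < 1 := by
    have e1 : Real.exp (-((n : ℝ) + 1) / (2 * h)) < Real.exp (-1) := by
      apply Real.exp_lt_exp.2
      rw [div_lt_iff₀ (by positivity : (0:ℝ) < 2*h)]
      linarith
    have e2 : 1 / P₂ < Real.exp (-1) := by
      have : Real.exp 1 < Real.exp (((n : ℝ) - 1) / (4 * h)) := by
        apply Real.exp_lt_exp.2
        rw [lt_div_iff₀ (by positivity : (0:ℝ) < 4*h)]
        linarith
      have hP2gt : Real.exp 1 < P₂ := lt_trans this h2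
      rw [Real.exp_neg]
      rw [one_div, inv_lt_inv₀ hP2pos (Real.exp_pos 1)]
      exact hP2gt
    have he : Real.exp (-1) < 1/2 := by
      rw [Real.exp_neg]
      rw [inv_lt_comm₀ (Real.exp_pos 1) (by norm_num)]
      have := Real.exp_one_gt_d9
      norm_num
      linarith
    linarith
  refine ⟨h1, h2, h3, ?_⟩
  have hnh' : 0 < n * h := Nat.mul_pos (by omega) (by omega)
  have hcomm : h * n = n * h := Nat.mul_comm h n
  have hmulB : n * (h+1) = n * h + n := by ring
  have hmulB' : (h+1) * n = h * n + n := by ring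
  have habs : ∀ j, 1 ≤ j → |a j| = ((h:ℝ)*n)^(j*n-1) / ((Nat.factorial (n*j-1) : ℕ) : ℝ) := by
    intro j hj
    rw [ha j, if_neg (by omega)]
    rw [abs_div, abs_mul, abs_pow, abs_neg, abs_one, one_pow, one_mul,
      abs_of_nonneg (by positivity : (0:ℝ) ≤ ((h:ℝ)*n)^(j*n-1)),
      abs_of_nonneg (by positivity : (0:ℝ) ≤ ((Nat.factorial (n*j-1) : ℕ) : ℝ))]
  have hah : |a h| = ((h:ℝ)*n)^(h*n-1) / ((Nat.factorial (n*h-1) : ℕ) : ℝ) := habs h hh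
  have hahpos : 0 < |a h| := by
    rw [hah]
    have := Nat.factorial_pos (n*h-1)
    positivity
  -- product identity B
  have hP2' : P₂ = ∏ ℓ ∈ range n, (1 + (ℓ:ℝ)/((n:ℝ)*h)) := by
    rw [hP₂, hIcc, Finset.range_eq_Ico,
      Finset.prod_eq_prod_Ico_succ_bot (show 0 < n by omega)]
    norm_num
  have hpow : ∀ (x : ℝ), x ^ n = ∏ _ℓ ∈ range n, x := by
    intro x; rw [Finset.prod_const, card_range]
  have hprodB : P₂ * ((n:ℝ)*h)^n = ((n*h).ascFactorial n : ℝ) := by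
    rw [hP2', asc_prod, hpow, ← Finset.prod_mul_distrib]
    push_cast
    apply Finset.prod_congr rfl
    intro i _
    field_simp
  have hascBpos : (0:ℝ) < ((n*h).ascFactorial n : ℝ) := by
    have : 0 < (n*h).ascFactorial n := by
      rw [asc_prod]
      exact Finset.prod_pos (fun i _ => by omega)
    exact_mod_cast this
  have hfacB : (Nat.factorial (n*(h+1)-1) : ℕ) = Nat.factorial (n*h-1) * (n*h).ascFactorial n := by
    have key := Nat.factorial_mul_ascFactorial (n*h-1) n
    rw [show n*h-1+1 = n*h by omega, show n*h-1+n = n*(h+1)-1 by omega] at key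
    exact key.symm
  have keyB : |a (h+1)| * P₂ = |a h| := by
    rw [habs (h+1) (by omega), hah, show (h+1)*n - 1 = (h*n - 1) + n by omega,
      pow_add, hfacB]
    have hFpos : (0:ℝ) < ((Nat.factorial (n*h-1) : ℕ) : ℝ) := by
      exact_mod_cast Nat.factorial_pos (n*h-1)
    push_cast
    rw [div_mul_eq_mul_div, div_eq_div_iff (mul_pos hFpos hascBpos).ne' hFpos.ne']
    linear_combination ((h:ℝ)*n)^(h*n-1) * ((Nat.factorial (n*h-1) : ℕ) : ℝ) * hprodB
  -- product identity A
  have hprodA : P₁ * ((n:ℝ)*h)^n = ((n*h - n).ascFactorial n : ℝ) := by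
    rw [hP₁, asc_prod, hpow, ← Finset.prod_mul_distrib]
    push_cast [Nat.cast_sub (Nat.le_mul_of_pos_right n hh)]
    apply Finset.prod_congr rfl
    intro i _
    field_simp
    ring
  have keyA : |a (h-1)| = P₁ * |a h| := by
    rcases eq_or_lt_of_le hh with h1' | h2'
    · have hP10 : P₁ = 0 := by
        rw [hP₁]
        apply Finset.prod_eq_zero (Finset.mem_range.2 (by omega : 0 < n))
        rw [← h1']
        push_cast
        field_simp
        simp
      rw [← h1', hP10]
      simp [ha 0]
    · have hh2 : 2 ≤ h := h2'
      have h2n : n*2 ≤ n*h := Nat.mul_le_mul_left n hh2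
      have emulA : n*(h-1) + n = n*h := by
        rw [← Nat.mul_succ]
        congr 1
        omega
      have emulA' : (h-1)*n + n = h*n := by
        rw [← Nat.succ_mul]
        congr 1
        omega
      have hfacA : (Nat.factorial (n*h-1) : ℕ)
          = Nat.factorial (n*(h-1)-1) * (n*h-n).ascFactorial n := by
        have key := Nat.factorial_mul_ascFactorial (n*h-n-1) n
        rw [show n*h-n-1+1 = n*h-n by omega, show n*h-n-1+n = n*h-1 by omega,
          show n*h-n-1 = n*(h-1)-1 by omega] at key
        exact key.symm
      have hascApos : (0:ℝ) < ((n*h - n).ascFactorial n : ℝ) := by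
        have : 0 < (n*h-n).ascFactorial n := by
          rw [asc_prod]
          exact Finset.prod_pos (fun i _ => by omega)
        exact_mod_cast this
      rw [habs (h-1) (by omega), hah, hfacA,
        show (h-1)*n - 1 = h*n - n - 1 by omega,
        show n*(h-1)-1 = n*h - n - 1 by omega,
        show h*n - 1 = (h*n - n - 1) + n by omega,
        pow_add]
      have hFpos : (0:ℝ) < ((Nat.factorial (n*h-n-1) : ℕ) : ℝ) := by
        exact_mod_cast Nat.factorial_pos (n*h-n-1)
      push_cast
      rw [mul_div_assoc', eq_div_iff (mul_pos hFpos hascApos).ne', div_mul_eq_mul_div,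
        div_eq_iff hFpos.ne']
      linear_combination (-(((h:ℝ)*n)^(h*n-n-1) * ((Nat.factorial (n*h-n-1) : ℕ) : ℝ))) * hprodA
  have hinv : |a (h+1)| = (1/P₂) * |a h| := by
    rw [← keyB]; field_simp
  rw [keyA, hinv]
  calc P₁ * |a h| + 1/P₂ * |a h| = (P₁ + 1/P₂) * |a h| := by ring
    _ < 1 * |a h| := mul_lt_mul_of_pos_right h3 hahpos
    _ = |a h| := one_mul _
end
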